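/- arXiv:1411.1837 — 5 statements merged into one kernel-verified Lean document; each statement's English description precedes it below -/
import Mathlib

section
/- Let G be a simple bipartite graph with parts A and B, each of size 5, such that the multiset of vertex degrees of A in G is {5,5,5,4,3} and the multiset of vertex degrees of B in G is {5,5,5,4,3}. Then G is isomorphic to the graph obtained from the complete bipartite graph K_{5,5}, with parts {a1,a2,a3,a4,a5} and {b1,b2,b3,b4,b5}, by deleting the three edges a4b5, a5b4 and a5b5. (In particular, any two bipartite graphs with these part degree sequences are isomorphic; this graph is Cousin 110 of the E9+e family.) -/
open SimpleGraph

/-- Cousin 110 of the `E₉+e` family: the complete bipartite graph `K_{5,5}` with parts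
`{a1,…,a5}` and `{b1,…,b5}` minus the three edges `a4b5`, `a5b4` and `a5b5`
(indices shifted to `Fin 5`, so the deleted edges are `(inl 3, inr 4)`, `(inl 4, inr 3)`
and `(inl 4, inr 4)`). -/
def cousin110 : SimpleGraph (Fin 5 ⊕ Fin 5) :=
  (completeBipartiteGraph (Fin 5) (Fin 5)).deleteEdges
    {s(Sum.inl 3, Sum.inr 4), s(Sum.inl 4, Sum.inr 3), s(Sum.inl 4, Sum.inr 4)}

lemma exists_perm_eq (D : Fin 5 → ℕ)
    (h : Multiset.map D Finset.univ.val = {5,5,5,4,3}) :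
    ∃ e : Equiv.Perm (Fin 5), ∀ i, D (e i) = ![5,5,5,4,3] i := by
  have hperm : List.Perm (List.ofFn D) [3,4,5,5,5] := by
    rw [Fin.univ_val_map] at h
    exact Multiset.coe_eq_coe.mp (by rw [h]; decide)
  have key : D ∘ Tuple.sort D = ![3,4,5,5,5] := by
    apply List.ofFn_injective
    refine (fun hp h1 h2 => List.Perm.eq_of_pairwise' (r := (· ≤ ·)) h1 h2 hp) ?_ ?_ ?_
    · exact ((Tuple.sort D).ofFn_comp_perm D).trans (hperm.trans (by decide))
    · exact (Tuple.monotone_sort D).sortedLE_ofFn.pairwise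
    · decide
  refine ⟨(Fin.revPerm).trans (Tuple.sort D), fun i => ?_⟩
  fin_cases i <;> simp [show ∀ k, D (Tuple.sort D k) = ![3,4,5,5,5] k from congrFun key]

/-- A bipartite graph with parts of size 5 whose two part degree multisets are both
`{5,5,5,4,3}` is isomorphic to Cousin 110 of the `E₉+e` family. -/
theorem bipartite_55543_55543_unique (G : SimpleGraph (Fin 5 ⊕ Fin 5)) [DecidableRel G.Adj]
    (hbip : ∀ x y, G.Adj x y → (x.isLeft ∧ y.isRight) ∨ (x.isRight ∧ y.isLeft))
    (hA : Multiset.map (fun i : Fin 5 => G.degree (Sum.inl i)) Finset.univ.val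
      = {5, 5, 5, 4, 3})
    (hB : Multiset.map (fun j : Fin 5 => G.degree (Sum.inr j)) Finset.univ.val
      = {5, 5, 5, 4, 3}) :
    Nonempty (G ≃g cousin110) := by
  obtain ⟨eL, hdL⟩ := exists_perm_eq _ hA
  obtain ⟨eR, hdR⟩ := exists_perm_eq _ hB
  -- the sets of left and right vertices
  set R : Finset (Fin 5 ⊕ Fin 5) := Finset.univ.image Sum.inr with hR
  set L : Finset (Fin 5 ⊕ Fin 5) := Finset.univ.image Sum.inl with hL
  have hcardR : R.card = 5 := by
    rw [hR, Finset.card_image_of_injective _ Sum.inr_injective]; simp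
  have hcardL : L.card = 5 := by
    rw [hL, Finset.card_image_of_injective _ Sum.inl_injective]; simp
  -- neighborhoods lie in the opposite part
  have hsubR : ∀ a : Fin 5, G.neighborFinset (Sum.inl a) ⊆ R := by
    intro a y hy
    rw [mem_neighborFinset] at hy
    rcases hbip _ _ hy with ⟨_, hr⟩ | ⟨hl, _⟩
    · obtain ⟨b, rfl⟩ := Sum.isRight_iff.mp hr
      exact Finset.mem_image_of_mem _ (Finset.mem_univ b)
    · simp at hl
  have hsubL : ∀ b : Fin 5, G.neighborFinset (Sum.inr b) ⊆ L := by
    intro b y hy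
    rw [mem_neighborFinset] at hy
    rcases hbip _ _ hy with ⟨hl, _⟩ | ⟨_, hr⟩
    · simp at hl
    · obtain ⟨a, rfl⟩ := Sum.isLeft_iff.mp hr
      exact Finset.mem_image_of_mem _ (Finset.mem_univ a)
  -- degree-5 vertices are adjacent to everything on the other side
  have h5L : ∀ a : Fin 5, G.degree (Sum.inl a) = 5 → ∀ b : Fin 5,
      G.Adj (Sum.inl a) (Sum.inr b) := by
    intro a ha b
    have heq : G.neighborFinset (Sum.inl a) = R := by
      apply Finset.eq_of_subset_of_card_le (hsubR a)
      rw [hcardR, card_neighborFinset_eq_degree, ha]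
    rw [← mem_neighborFinset, heq, hR]
    exact Finset.mem_image_of_mem _ (Finset.mem_univ b)
  have h5R : ∀ b : Fin 5, G.degree (Sum.inr b) = 5 → ∀ a : Fin 5,
      G.Adj (Sum.inl a) (Sum.inr b) := by
    intro b hb a
    have heq : G.neighborFinset (Sum.inr b) = L := by
      apply Finset.eq_of_subset_of_card_le (hsubL b)
      rw [hcardL, card_neighborFinset_eq_degree, hb]
    have : Sum.inl a ∈ G.neighborFinset (Sum.inr b) := by
      rw [heq, hL]; exact Finset.mem_image_of_mem _ (Finset.mem_univ a)
    exact ((mem_neighborFinset _ _ _).mp this).symm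
  -- the degree-3 left vertex is adjacent exactly to the three degree-5 right vertices
  have hN4 : G.neighborFinset (Sum.inl (eL 4)) =
      {Sum.inr (eR 0), Sum.inr (eR 1), Sum.inr (eR 2)} := by
    symm
    apply Finset.eq_of_subset_of_card_le
    · intro y hy
      simp only [Finset.mem_insert, Finset.mem_singleton] at hy
      rw [mem_neighborFinset]
      rcases hy with rfl | rfl | rfl
      · exact (h5R _ (by simpa using hdR 0) _)
      · exact (h5R _ (by simpa using hdR 1) _)
      · exact (h5R _ (by simpa using hdR 2) _)
    · rw [card_neighborFinset_eq_degree]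
      have h3 : G.degree (Sum.inl (eL 4)) = 3 := by simpa using hdL 4
      rw [h3]
      have : ({Sum.inr (eR 0), Sum.inr (eR 1), Sum.inr (eR 2)} :
          Finset (Fin 5 ⊕ Fin 5)).card = 3 := by
        rw [Finset.card_insert_of_notMem, Finset.card_insert_of_notMem] <;>
          simp [Sum.inr_injective.eq_iff, eR.injective.eq_iff]
      omega
  have hN4R : G.neighborFinset (Sum.inr (eR 4)) =
      {Sum.inl (eL 0), Sum.inl (eL 1), Sum.inl (eL 2)} := by
    symm
    apply Finset.eq_of_subset_of_card_le
    · intro y hy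
      simp only [Finset.mem_insert, Finset.mem_singleton] at hy
      rw [mem_neighborFinset]
      rcases hy with rfl | rfl | rfl
      · exact (h5L _ (by simpa using hdL 0) _).symm
      · exact (h5L _ (by simpa using hdL 1) _).symm
      · exact (h5L _ (by simpa using hdL 2) _).symm
    · rw [card_neighborFinset_eq_degree]
      have h3 : G.degree (Sum.inr (eR 4)) = 3 := by simpa using hdR 4
      rw [h3]
      have : ({Sum.inl (eL 0), Sum.inl (eL 1), Sum.inl (eL 2)} :
          Finset (Fin 5 ⊕ Fin 5)).card = 3 := by
        rw [Finset.card_insert_of_notMem, Finset.card_insert_of_notMem] <;>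
          simp [Sum.inl_injective.eq_iff, eL.injective.eq_iff]
      omega
  have hn43 : ¬ G.Adj (Sum.inl (eL 4)) (Sum.inr (eR 3)) := by
    rw [← mem_neighborFinset, hN4]
    simp [Sum.inr_injective.eq_iff, eR.injective.eq_iff]
  have hn44 : ¬ G.Adj (Sum.inl (eL 4)) (Sum.inr (eR 4)) := by
    rw [← mem_neighborFinset, hN4]
    simp [Sum.inr_injective.eq_iff, eR.injective.eq_iff]
  have hn34 : ¬ G.Adj (Sum.inl (eL 3)) (Sum.inr (eR 4)) := by
    intro h
    have : Sum.inl (eL 3) ∈ G.neighborFinset (Sum.inr (eR 4)) :=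
      (mem_neighborFinset _ _ _).mpr h.symm
    rw [hN4R] at this
    simp [Sum.inl_injective.eq_iff, eL.injective.eq_iff] at this
  have h33 : G.Adj (Sum.inl (eL 3)) (Sum.inr (eR 3)) := by
    have heq : G.neighborFinset (Sum.inl (eL 3)) = R.erase (Sum.inr (eR 4)) := by
      apply Finset.eq_of_subset_of_card_le
      · intro y hy
        refine Finset.mem_erase.mpr ⟨?_, hsubR _ hy⟩
        rintro rfl
        exact hn34 ((mem_neighborFinset _ _ _).mp hy)
      · rw [Finset.card_erase_of_mem (by exact Finset.mem_image_of_mem _ (Finset.mem_univ _)),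
          hcardR, card_neighborFinset_eq_degree]
        have : G.degree (Sum.inl (eL 3)) = 4 := by simpa using hdL 3
        omega
    rw [← mem_neighborFinset, heq]
    refine Finset.mem_erase.mpr ⟨?_, Finset.mem_image_of_mem _ (Finset.mem_univ _)⟩
    simp [Sum.inr_injective.eq_iff, eR.injective.eq_iff]
  -- the adjacency table
  have table : ∀ i j : Fin 5, G.Adj (Sum.inl (eL i)) (Sum.inr (eR j)) ↔
      cousin110.Adj (Sum.inl i) (Sum.inr j) := by
    have hc : ∀ i j : Fin 5, cousin110.Adj (Sum.inl i) (Sum.inr j) ↔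
        ¬(i = 3 ∧ j = 4) ∧ ¬(i = 4 ∧ j = 3) ∧ ¬(i = 4 ∧ j = 4) := by
      intro i j; simp [cousin110]
    intro i j
    rw [hc]
    by_cases hi : (i : ℕ) ≤ 2
    · have hdeg : G.degree (Sum.inl (eL i)) = 5 := by
        rw [hdL i]; fin_cases i <;> simp_all
      refine iff_of_true (h5L _ hdeg _) ⟨?_, ?_, ?_⟩ <;> rintro ⟨rfl, rfl⟩ <;>
        exact absurd hi (by decide)
    by_cases hj : (j : ℕ) ≤ 2
    · have hdeg : G.degree (Sum.inr (eR j)) = 5 := by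
        rw [hdR j]; fin_cases j <;> simp_all
      refine iff_of_true (h5R _ hdeg _) ⟨?_, ?_, ?_⟩ <;> rintro ⟨rfl, rfl⟩ <;>
        exact absurd hj (by decide)
    have hi' : i = 3 ∨ i = 4 := by omega
    have hj' : j = 3 ∨ j = 4 := by omega
    rcases hi' with rfl | rfl <;> rcases hj' with rfl | rfl
    · exact iff_of_true h33 (by simp)
    · exact iff_of_false hn34 (by simp)
    · exact iff_of_false hn43 (by simp)
    · exact iff_of_false hn44 (by simp)
  -- build the isomorphism
  refine ⟨(RelIso.mk (Equiv.sumCongr eL eR) ?_).symm⟩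
  rintro (i | i) (j | j)
  · constructor
    · intro h; rcases hbip _ _ h with ⟨_, hr⟩ | ⟨hl, _⟩ <;> simp_all
    · intro h; simp [cousin110] at h
  · exact table i j
  · constructor
    · intro h; exact ((table j i).mp h.symm).symm
    · intro h
      have : cousin110.Adj (Sum.inl j) (Sum.inr i) := h.symm
      exact ((table j i).mpr this).symm
  · constructor
    · intro h; rcases hbip _ _ h with ⟨hl, _⟩ | ⟨_, hr⟩ <;> simp_all
    · intro h; simp [cousin110] at h
end

section
/- Every simple graph on 14 vertices that is bipartite, 3-regular, and contains no cycle of length 4 (equivalently, any two distinct vertices have at most one common neighbor) is isomorphic to the Heawood graph. -/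
open SimpleGraph

/-- The Heawood graph on vertex set `ZMod 14`: distinct vertices `i` and `j` are adjacent
iff `j = i + 1`, or `j = i - 1`, or (`i` is even and `j = i + 5`), or
(`j` is even and `i = j + 5`), all mod 14. -/
def heawood : SimpleGraph (ZMod 14) where
  Adj i j := i ≠ j ∧ (j = i + 1 ∨ j = i - 1 ∨ (Even i ∧ j = i + 5) ∨ (Even j ∧ i = j + 5))
  symm := ⟨by
    rintro i j ⟨hne, h⟩
    refine ⟨hne.symm, ?_⟩
    rcases h with h | h | h | h
    · right; left; rw [h]; ring
    · left; rw [h]; ring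
    · right; right; right; exact h
    · right; right; left; exact h⟩
  loopless := ⟨fun i h => h.1 rfl⟩

instance (i : ZMod 14) : Decidable (Even i) :=
  decidable_of_iff (∃ r : ZMod 14, i = r + r) Iff.rfl

instance : DecidableRel heawood.Adj := fun i j =>
  inferInstanceAs (Decidable
    (i ≠ j ∧ (j = i + 1 ∨ j = i - 1 ∨ (Even i ∧ j = i + 5) ∨ (Even j ∧ i = j + 5))))

section heawoodHelpers
variable {V : Type*} {G : SimpleGraph V}

lemma nc_aux (hC4 : ∀ (v : V) (c : G.Walk v v), c.IsCycle → c.length ≠ 4)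
    {x y p q : V} (hxy : x ≠ y) (hpq : p ≠ q) (hpx : G.Adj p x) (hpy : G.Adj p y)
    (hqx : G.Adj q x) (hqy : G.Adj q y) : False := by
  refine hC4 x (.cons hpx.symm (.cons hpy (.cons hqy.symm (.cons hqx .nil)))) ?_ rfl
  have h1 : x ≠ p := fun h => (G.loopless.irrefl p) (h ▸ hpx)
  have h2 : y ≠ p := fun h => (G.loopless.irrefl p) (h ▸ hpy)
  have h3 : x ≠ q := fun h => (G.loopless.irrefl q) (h ▸ hqx)
  have h4 : y ≠ q := fun h => (G.loopless.irrefl q) (h ▸ hqy)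
  rw [SimpleGraph.Walk.isCycle_def]
  refine ⟨?_, by simp, ?_⟩
  · rw [SimpleGraph.Walk.isTrail_def]
    simp [Sym2.eq_iff]
    tauto
  · simp
    tauto

lemma col2 {C : G.Coloring (Fin 2)} {x y z : V} (h1 : G.Adj x y) (h2 : G.Adj y z) :
    C x = C z := by
  have v1 := C.valid h1
  have v2 := C.valid h2
  omega

lemma pickPair {s : Finset V} [DecidableEq V] (h3 : s.card = 3) {v : V} (hv : v ∈ s) :
    ∃ x y, x ≠ y ∧ x ≠ v ∧ y ≠ v ∧ s = {v, x, y} := by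
  obtain ⟨p, q, r, hpq, hpr, hqr, rfl⟩ := Finset.card_eq_three.1 h3
  simp only [Finset.mem_insert, Finset.mem_singleton] at hv
  rcases hv with rfl | rfl | rfl
  · exact ⟨q, r, hqr, hpq.symm, hpr.symm, rfl⟩
  · exact ⟨p, r, hpr, hpq, hqr.symm, by ext t; simp; tauto⟩
  · exact ⟨p, q, hpq, hpr, hqr, by ext t; simp; tauto⟩

lemma card_le_two {p q : V} [DecidableEq V] : ({p, q} : Finset V).card ≤ 2 := by
  refine le_trans (Finset.card_insert_le _ _) ?_
  simp

lemma card_le_three {p q r : V} [DecidableEq V] : ({p, q, r} : Finset V).card ≤ 3 := by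
  refine le_trans (Finset.card_insert_le _ _) ?_
  have := card_le_two (p := q) (q := r) (V := V)
  omega

lemma pick3 {s : Finset V} [DecidableEq V] {p q r u w : V}
    (hs : s ⊆ {p, q, r, u, w}) (hcard : s.card = 3) (hp : p ∈ s)
    (hqr : ¬(q ∈ s ∧ r ∈ s)) (huw : ¬(u ∈ s ∧ w ∈ s)) :
    ∃ x y, (x = q ∨ x = r) ∧ (y = u ∨ y = w) ∧ x ∈ s ∧ y ∈ s ∧ s = {p, x, y} := by
  have two : ∀ x y : V, (∀ t, t ∈ s → t = x ∨ t = y) → False := by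
    intro x y h
    have hsub : s ⊆ {x, y} := fun t ht => by
      simp only [Finset.mem_insert, Finset.mem_singleton]; exact h t ht
    have := Finset.card_le_card hsub
    have h2 : ({x, y} : Finset V).card ≤ 2 := card_le_two
    omega
  have key : ∀ x y : V, (x = q ∨ x = r) → (y = u ∨ y = w) → x ∈ s → y ∈ s →
      ∃ x' y', (x' = q ∨ x' = r) ∧ (y' = u ∨ y' = w) ∧ x' ∈ s ∧ y' ∈ s ∧ s = {p, x', y'} := by
    intro x y hx hy hxs hys
    refine ⟨x, y, hx, hy, hxs, hys, ?_⟩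
    have hsub : s ⊆ {p, x, y} := by
      intro t ht
      have h5 := hs ht
      simp only [Finset.mem_insert, Finset.mem_singleton] at h5 ⊢
      rcases h5 with rfl | rfl | rfl | rfl | rfl
      · tauto
      · rcases hx with rfl | rfl
        · tauto
        · exact absurd ⟨ht, hxs⟩ hqr
      · rcases hx with rfl | rfl
        · exact absurd ⟨hxs, ht⟩ hqr
        · tauto
      · rcases hy with rfl | rfl
        · tauto
        · exact absurd ⟨ht, hys⟩ huw
      · rcases hy with rfl | rfl
        · exact absurd ⟨hys, ht⟩ huw
        · tauto
    refine Finset.eq_of_subset_of_card_le hsub ?_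
    have : ({p, x, y} : Finset V).card ≤ 3 := card_le_three
    omega
  have sub5 : ∀ t, t ∈ s → t = p ∨ t = q ∨ t = r ∨ t = u ∨ t = w := by
    intro t ht
    have := hs ht
    simpa using this
  by_cases hq : q ∈ s <;> by_cases hr : r ∈ s <;> by_cases hu : u ∈ s <;> by_cases hw : w ∈ s
  · exact absurd ⟨hq, hr⟩ hqr
  · exact absurd ⟨hq, hr⟩ hqr
  · exact absurd ⟨hq, hr⟩ hqr
  · exact absurd ⟨hq, hr⟩ hqr
  · exact absurd ⟨hu, hw⟩ huw
  · exact key q u (Or.inl rfl) (Or.inl rfl) hq hu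
  · exact key q w (Or.inl rfl) (Or.inr rfl) hq hw
  · exact absurd (two p q (fun t ht => by rcases sub5 t ht with rfl|rfl|rfl|rfl|rfl <;> tauto)) not_false
  · exact absurd ⟨hu, hw⟩ huw
  · exact key r u (Or.inr rfl) (Or.inl rfl) hr hu
  · exact key r w (Or.inr rfl) (Or.inr rfl) hr hw
  · exact absurd (two p r (fun t ht => by rcases sub5 t ht with rfl|rfl|rfl|rfl|rfl <;> tauto)) not_false
  · exact absurd ⟨hu, hw⟩ huw
  · exact absurd (two p u (fun t ht => by rcases sub5 t ht with rfl|rfl|rfl|rfl|rfl <;> tauto)) not_false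
  · exact absurd (two p w (fun t ht => by rcases sub5 t ht with rfl|rfl|rfl|rfl|rfl <;> tauto)) not_false
  · exact absurd (two p q (fun t ht => by rcases sub5 t ht with rfl|rfl|rfl|rfl|rfl <;> tauto)) not_false

lemma pick1 {s : Finset V} [DecidableEq V] {p q u w : V}
    (hs : s ⊆ {p, q, u, w}) (hcard : s.card = 3) (hp : p ∈ s) (hq : q ∈ s)
    (huw : ¬(u ∈ s ∧ w ∈ s)) :
    ∃ x, (x = u ∨ x = w) ∧ x ∈ s ∧ s = {p, q, x} := by
  have key : ∀ x : V, (x = u ∨ x = w) → x ∈ s →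
      ∃ x', (x' = u ∨ x' = w) ∧ x' ∈ s ∧ s = {p, q, x'} := by
    intro x hx hxs
    refine ⟨x, hx, hxs, ?_⟩
    have hsub : s ⊆ {p, q, x} := by
      intro t ht
      have h5 := hs ht
      simp only [Finset.mem_insert, Finset.mem_singleton] at h5 ⊢
      rcases h5 with rfl | rfl | rfl | rfl
      · tauto
      · tauto
      · rcases hx with rfl | rfl
        · tauto
        · exact absurd ⟨ht, hxs⟩ huw
      · rcases hx with rfl | rfl
        · exact absurd ⟨hxs, ht⟩ huw
        · tauto
    refine Finset.eq_of_subset_of_card_le hsub ?_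
    have : ({p, q, x} : Finset V).card ≤ 3 := card_le_three
    omega
  by_cases hu : u ∈ s
  · exact key u (Or.inl rfl) hu
  · by_cases hw : w ∈ s
    · exact key w (Or.inr rfl) hw
    · exfalso
      have hsub : s ⊆ {p, q} := by
        intro t ht
        have h5 := hs ht
        simp only [Finset.mem_insert, Finset.mem_singleton] at h5 ⊢
        rcases h5 with rfl | rfl | rfl | rfl
        · tauto
        · tauto
        · exact absurd ht hu
        · exact absurd ht hw
      have := Finset.card_le_card hsub
      have h2 : ({p, q} : Finset V).card ≤ 2 := card_le_two
      omega

lemma eq3 {s : Finset V} [DecidableEq V] {p q r : V}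
    (hs : s ⊆ {p, q, r}) (hcard : s.card = 3) : s = {p, q, r} :=
  Finset.eq_of_subset_of_card_le hs (le_trans card_le_three (le_of_eq hcard.symm))

lemma eq3' {s : Finset V} [DecidableEq V] {p q r : V}
    (hs : ({p, q, r} : Finset V) ⊆ s) (hcard : s.card = 3)
    (h1 : p ≠ q) (h2 : p ≠ r) (h3 : q ≠ r) : s = {p, q, r} := by
  have hc3 : ({p, q, r} : Finset V).card = 3 := Finset.card_eq_three.2 ⟨p, q, r, h1, h2, h3, rfl⟩
  exact (Finset.eq_of_subset_of_card_le hs (by omega)).symm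

lemma three_ne {p q r : V} [DecidableEq V] (h : ({p, q, r} : Finset V).card = 3) :
    p ≠ q ∧ p ≠ r ∧ q ≠ r := by
  refine ⟨?_, ?_, ?_⟩ <;> rintro rfl
  · have hsub : ({p, p, r} : Finset V) ⊆ {p, r} := by intro t ht; simpa using ht
    have := Finset.card_le_card hsub
    have h2 : ({p, r} : Finset V).card ≤ 2 := card_le_two
    omega
  · have hsub : ({p, q, p} : Finset V) ⊆ {p, q} := by
      intro t ht; simp at ht ⊢; tauto
    have := Finset.card_le_card hsub
    have h2 : ({p, q} : Finset V).card ≤ 2 := card_le_two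
    omega
  · have hsub : ({p, q, q} : Finset V) ⊆ {p, q} := by intro t ht; simpa using ht
    have := Finset.card_le_card hsub
    have h2 : ({p, q} : Finset V).card ≤ 2 := card_le_two
    omega

lemma adj_of_nbhd [Fintype V] [DecidableRel G.Adj] [DecidableEq V] {x p q r : V}
    (h : G.neighborFinset x = {p, q, r}) : G.Adj x p ∧ G.Adj x q ∧ G.Adj x r := by
  refine ⟨?_, ?_, ?_⟩ <;> rw [← SimpleGraph.mem_neighborFinset, h] <;> simp

lemma notadj_of_nbhd [Fintype V] [DecidableRel G.Adj] [DecidableEq V] {x p q r y : V}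
    (h : G.neighborFinset x = {p, q, r}) (h1 : y ≠ p) (h2 : y ≠ q) (h3 : y ≠ r) :
    ¬ G.Adj x y := by
  rw [← SimpleGraph.mem_neighborFinset, h]
  simp [h1, h2, h3]

lemma or3_swap23 {p q r : Prop} (h : p ∨ q ∨ r) : p ∨ r ∨ q := by tauto

lemma notadj_of_mem {v p q r y : V} (m : ∀ x, G.Adj v x → (x = p ∨ x = q ∨ x = r))
    (h1 : y ≠ p) (h2 : y ≠ q) (h3 : y ≠ r) : ¬ G.Adj v y := fun h => by
  rcases m y h with h' | h' | h'
  exacts [h1 h', h2 h', h3 h']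

lemma mem_of_nbhd [Fintype V] [DecidableRel G.Adj] [DecidableEq V] {v p q r : V}
    (h : G.neighborFinset v = {p, q, r}) : ∀ x, G.Adj v x → (x = p ∨ x = q ∨ x = r) :=
  fun x hx => by
    have hm := (G.mem_neighborFinset v x).2 hx
    rw [h] at hm
    simpa using hm

lemma nbhd_of_mem [Fintype V] [DecidableRel G.Adj] [DecidableEq V] {v p q r : V}
    (m : ∀ x, G.Adj v x → (x = p ∨ x = q ∨ x = r))
    (hdeg : (G.neighborFinset v).card = 3) : G.neighborFinset v = {p, q, r} := by
  refine Finset.eq_of_subset_of_card_le ?_ (le_trans card_le_three (le_of_eq hdeg.symm))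
  intro t ht
  simp only [Finset.mem_insert, Finset.mem_singleton]
  exact m t ((G.mem_neighborFinset v t).1 ht)

end heawoodHelpers


lemma or14_swap78 {p1 p2 p3 p4 p5 p6 p7 p8 p9 p10 p11 p12 p13 p14 : Prop}
    (h : p1∨p2∨p3∨p4∨p5∨p6∨p7∨p8∨p9∨p10∨p11∨p12∨p13∨p14) :
    p1∨p2∨p3∨p4∨p5∨p6∨p8∨p7∨p9∨p10∨p11∨p12∨p13∨p14 := by tauto

lemma or14_swap910 {p1 p2 p3 p4 p5 p6 p7 p8 p9 p10 p11 p12 p13 p14 : Prop}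
    (h : p1∨p2∨p3∨p4∨p5∨p6∨p7∨p8∨p9∨p10∨p11∨p12∨p13∨p14) :
    p1∨p2∨p3∨p4∨p5∨p6∨p7∨p8∨p10∨p9∨p11∨p12∨p13∨p14 := by tauto

lemma or14_swap1314 {p1 p2 p3 p4 p5 p6 p7 p8 p9 p10 p11 p12 p13 p14 : Prop}
    (h : p1∨p2∨p3∨p4∨p5∨p6∨p7∨p8∨p9∨p10∨p11∨p12∨p13∨p14) :
    p1∨p2∨p3∨p4∨p5∨p6∨p7∨p8∨p9∨p10∨p11∨p12∨p14∨p13 := by tauto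

lemma or14_to_g {p0 p1 p2 p3 p4 p5 p6 p7 p8 p9 p10 p11 p12 p13 : Prop}
    (h : p0∨p1∨p2∨p3∨p4∨p5∨p6∨p7∨p8∨p9∨p10∨p11∨p12∨p13) :
    p0∨p1∨p4∨p10∨p6∨p2∨p7∨p11∨p9∨p12∨p5∨p13∨p8∨p3 := by tauto

/-- Neighbor table for the Heawood graph, used to transfer adjacency. -/
def heawoodNbrs : ZMod 14 → Finset (ZMod 14) :=
  ![{1,5,13},{0,2,10},{1,3,7},{2,4,12},{5,3,9},{0,4,6},{5,7,11},{2,6,8},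
    {13,7,9},{10,4,8},{1,9,11},{10,6,12},{13,3,11},{0,12,8}]

/-- Every 14-vertex bipartite 3-regular simple graph with no 4-cycle is isomorphic to the
Heawood graph. -/
theorem heawood_unique (V : Type*) [Fintype V] (G : SimpleGraph V) [DecidableRel G.Adj]
    (hcard : Fintype.card V = 14)
    (hbip : G.Colorable 2)
    (hreg : G.IsRegularOfDegree 3)
    (hC4 : ∀ (v : V) (c : G.Walk v v), c.IsCycle → c.length ≠ 4) :
    Nonempty (G ≃g heawood) := by
  letI : DecidableEq V := Classical.decEq V
  have hnev : Nonempty V := Fintype.card_pos_iff.mp (by omega)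
  obtain ⟨C⟩ := hbip
  have nc : ∀ {x y p q : V}, x ≠ y → p ≠ q → G.Adj p x → G.Adj p y → G.Adj q x →
      G.Adj q y → False := fun h1 h2 h3 h4 h5 h6 => nc_aux hC4 h1 h2 h3 h4 h5 h6
  have tf : ∀ {x y z : V}, G.Adj x y → G.Adj y z → G.Adj x z → False :=
    fun hxy hyz hxz => C.valid hxz (col2 hxy hyz)
  have hdeg : ∀ v : V, (G.neighborFinset v).card = 3 :=
    fun v => (G.card_neighborFinset_eq_degree v).trans (hreg v)
  obtain ⟨v0⟩ := hnev
  obtain ⟨a, b, c, hab, hac, hbc, hNv0⟩ := Finset.card_eq_three.1 (hdeg v0)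
  have hv0a : G.Adj v0 a := (adj_of_nbhd hNv0).1
  have hv0b : G.Adj v0 b := (adj_of_nbhd hNv0).2.1
  have hv0c : G.Adj v0 c := (adj_of_nbhd hNv0).2.2
  obtain ⟨a1, a2, ha12, ha1v0, ha2v0, hNa⟩ :=
    pickPair (hdeg a) ((G.mem_neighborFinset a v0).2 hv0a.symm)
  obtain ⟨b1, b2, hb12, hb1v0, hb2v0, hNb⟩ :=
    pickPair (hdeg b) ((G.mem_neighborFinset b v0).2 hv0b.symm)
  obtain ⟨c1, c2, hc12, hc1v0, hc2v0, hNc⟩ :=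
    pickPair (hdeg c) ((G.mem_neighborFinset c v0).2 hv0c.symm)
  have haa1 : G.Adj a a1 := (adj_of_nbhd hNa).2.1
  have haa2 : G.Adj a a2 := (adj_of_nbhd hNa).2.2
  have hbb1 : G.Adj b b1 := (adj_of_nbhd hNb).2.1
  have hbb2 : G.Adj b b2 := (adj_of_nbhd hNb).2.2
  have hcc1 : G.Adj c c1 := (adj_of_nbhd hNc).2.1
  have hcc2 : G.Adj c c2 := (adj_of_nbhd hNc).2.2
  obtain ⟨d0, d1, hd01, hd0a, hd1a, hNa1⟩ :=
    pickPair (hdeg a1) ((G.mem_neighborFinset a1 a).2 haa1.symm)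
  obtain ⟨e2, e3, he23, he2a, he3a, hNa2⟩ :=
    pickPair (hdeg a2) ((G.mem_neighborFinset a2 a).2 haa2.symm)
  have ha1d0 : G.Adj a1 d0 := (adj_of_nbhd hNa1).2.1
  have ha1d1 : G.Adj a1 d1 := (adj_of_nbhd hNa1).2.2
  have ha2e2 : G.Adj a2 e2 := (adj_of_nbhd hNa2).2.1
  have ha2e3 : G.Adj a2 e3 := (adj_of_nbhd hNa2).2.2
  -- color facts
  have hcol_a1 : C a1 = C v0 := col2 haa1.symm hv0a.symm
  have hcol_a2 : C a2 = C v0 := col2 haa2.symm hv0a.symm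
  have hcol_b1 : C b1 = C v0 := col2 hbb1.symm hv0b.symm
  have hcol_b2 : C b2 = C v0 := col2 hbb2.symm hv0b.symm
  have hcol_c1 : C c1 = C v0 := col2 hcc1.symm hv0c.symm
  have hcol_c2 : C c2 = C v0 := col2 hcc2.symm hv0c.symm
  have hcol_b : C b = C a := col2 hv0b.symm hv0a
  have hcol_c : C c = C a := col2 hv0c.symm hv0a
  have hcol_d0 : C d0 = C a := col2 ha1d0.symm haa1.symm
  have hcol_d1 : C d1 = C a := col2 ha1d1.symm haa1.symm
  have hcol_e2 : C e2 = C a := col2 ha2e2.symm haa2.symm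
  have hcol_e3 : C e3 = C a := col2 ha2e3.symm haa2.symm
  have hne_class : ∀ {x y : V}, C x = C v0 → C y = C a → x ≠ y :=
    fun h1 h2 heq => C.valid hv0a (by rw [← h1, heq, h2])
  have hsame1 : ∀ {x y : V}, C x = C v0 → C y = C v0 → ¬ G.Adj x y :=
    fun h1 h2 h => C.valid h (h1.trans h2.symm)
  have hsame2 : ∀ {x y : V}, C x = C a → C y = C a → ¬ G.Adj x y :=
    fun h1 h2 h => C.valid h (h1.trans h2.symm)
  have ne_v0_a : v0 ≠ a := hne_class rfl rfl
  have ne_v0_b : v0 ≠ b := hne_class rfl hcol_b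
  have ne_v0_c : v0 ≠ c := hne_class rfl hcol_c
  have ne_v0_a1 : v0 ≠ a1 := ha1v0.symm
  have ne_v0_a2 : v0 ≠ a2 := ha2v0.symm
  have ne_v0_b1 : v0 ≠ b1 := hb1v0.symm
  have ne_v0_b2 : v0 ≠ b2 := hb2v0.symm
  have ne_v0_c1 : v0 ≠ c1 := hc1v0.symm
  have ne_v0_c2 : v0 ≠ c2 := hc2v0.symm
  have ne_v0_d0 : v0 ≠ d0 := hne_class rfl hcol_d0
  have ne_v0_d1 : v0 ≠ d1 := hne_class rfl hcol_d1
  have ne_v0_e2 : v0 ≠ e2 := hne_class rfl hcol_e2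
  have ne_v0_e3 : v0 ≠ e3 := hne_class rfl hcol_e3
  have ne_a_b : a ≠ b := hab
  have ne_a_c : a ≠ c := hac
  have ne_a_a1 : a ≠ a1 := (hne_class hcol_a1 rfl).symm
  have ne_a_a2 : a ≠ a2 := (hne_class hcol_a2 rfl).symm
  have ne_a_b1 : a ≠ b1 := (hne_class hcol_b1 rfl).symm
  have ne_a_b2 : a ≠ b2 := (hne_class hcol_b2 rfl).symm
  have ne_a_c1 : a ≠ c1 := (hne_class hcol_c1 rfl).symm
  have ne_a_c2 : a ≠ c2 := (hne_class hcol_c2 rfl).symm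
  have ne_a_d0 : a ≠ d0 := hd0a.symm
  have ne_a_d1 : a ≠ d1 := hd1a.symm
  have ne_a_e2 : a ≠ e2 := he2a.symm
  have ne_a_e3 : a ≠ e3 := he3a.symm
  have ne_b_c : b ≠ c := hbc
  have ne_b_a1 : b ≠ a1 := (hne_class hcol_a1 hcol_b).symm
  have ne_b_a2 : b ≠ a2 := (hne_class hcol_a2 hcol_b).symm
  have ne_b_b1 : b ≠ b1 := (hne_class hcol_b1 hcol_b).symm
  have ne_b_b2 : b ≠ b2 := (hne_class hcol_b2 hcol_b).symm
  have ne_b_c1 : b ≠ c1 := (hne_class hcol_c1 hcol_b).symm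
  have ne_b_c2 : b ≠ c2 := (hne_class hcol_c2 hcol_b).symm
  have ne_b_d0 : b ≠ d0 := fun h => nc hab ne_v0_a1 hv0a hv0b haa1.symm (by rw [h]; exact ha1d0)
  have ne_b_d1 : b ≠ d1 := fun h => nc hab ne_v0_a1 hv0a hv0b haa1.symm (by rw [h]; exact ha1d1)
  have ne_b_e2 : b ≠ e2 := fun h => nc hab ne_v0_a2 hv0a hv0b haa2.symm (by rw [h]; exact ha2e2)
  have ne_b_e3 : b ≠ e3 := fun h => nc hab ne_v0_a2 hv0a hv0b haa2.symm (by rw [h]; exact ha2e3)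
  have ne_c_a1 : c ≠ a1 := (hne_class hcol_a1 hcol_c).symm
  have ne_c_a2 : c ≠ a2 := (hne_class hcol_a2 hcol_c).symm
  have ne_c_b1 : c ≠ b1 := (hne_class hcol_b1 hcol_c).symm
  have ne_c_b2 : c ≠ b2 := (hne_class hcol_b2 hcol_c).symm
  have ne_c_c1 : c ≠ c1 := (hne_class hcol_c1 hcol_c).symm
  have ne_c_c2 : c ≠ c2 := (hne_class hcol_c2 hcol_c).symm
  have ne_c_d0 : c ≠ d0 := fun h => nc hac ne_v0_a1 hv0a hv0c haa1.symm (by rw [h]; exact ha1d0)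
  have ne_c_d1 : c ≠ d1 := fun h => nc hac ne_v0_a1 hv0a hv0c haa1.symm (by rw [h]; exact ha1d1)
  have ne_c_e2 : c ≠ e2 := fun h => nc hac ne_v0_a2 hv0a hv0c haa2.symm (by rw [h]; exact ha2e2)
  have ne_c_e3 : c ≠ e3 := fun h => nc hac ne_v0_a2 hv0a hv0c haa2.symm (by rw [h]; exact ha2e3)
  have ne_a1_a2 : a1 ≠ a2 := ha12
  have ne_a1_b1 : a1 ≠ b1 := fun h => nc hab ne_v0_a1 hv0a hv0b haa1.symm (by rw [h]; exact hbb1.symm)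
  have ne_a1_b2 : a1 ≠ b2 := fun h => nc hab ne_v0_a1 hv0a hv0b haa1.symm (by rw [h]; exact hbb2.symm)
  have ne_a1_c1 : a1 ≠ c1 := fun h => nc hac ne_v0_a1 hv0a hv0c haa1.symm (by rw [h]; exact hcc1.symm)
  have ne_a1_c2 : a1 ≠ c2 := fun h => nc hac ne_v0_a1 hv0a hv0c haa1.symm (by rw [h]; exact hcc2.symm)
  have ne_a1_d0 : a1 ≠ d0 := hne_class hcol_a1 hcol_d0
  have ne_a1_d1 : a1 ≠ d1 := hne_class hcol_a1 hcol_d1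
  have ne_a1_e2 : a1 ≠ e2 := hne_class hcol_a1 hcol_e2
  have ne_a1_e3 : a1 ≠ e3 := hne_class hcol_a1 hcol_e3
  have ne_a2_b1 : a2 ≠ b1 := fun h => nc hab ne_v0_a2 hv0a hv0b haa2.symm (by rw [h]; exact hbb1.symm)
  have ne_a2_b2 : a2 ≠ b2 := fun h => nc hab ne_v0_a2 hv0a hv0b haa2.symm (by rw [h]; exact hbb2.symm)
  have ne_a2_c1 : a2 ≠ c1 := fun h => nc hac ne_v0_a2 hv0a hv0c haa2.symm (by rw [h]; exact hcc1.symm)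
  have ne_a2_c2 : a2 ≠ c2 := fun h => nc hac ne_v0_a2 hv0a hv0c haa2.symm (by rw [h]; exact hcc2.symm)
  have ne_a2_d0 : a2 ≠ d0 := hne_class hcol_a2 hcol_d0
  have ne_a2_d1 : a2 ≠ d1 := hne_class hcol_a2 hcol_d1
  have ne_a2_e2 : a2 ≠ e2 := hne_class hcol_a2 hcol_e2
  have ne_a2_e3 : a2 ≠ e3 := hne_class hcol_a2 hcol_e3
  have ne_b1_b2 : b1 ≠ b2 := hb12
  have ne_b1_c1 : b1 ≠ c1 := fun h => nc hbc ne_v0_b1 hv0b hv0c hbb1.symm (by rw [h]; exact hcc1.symm)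
  have ne_b1_c2 : b1 ≠ c2 := fun h => nc hbc ne_v0_b1 hv0b hv0c hbb1.symm (by rw [h]; exact hcc2.symm)
  have ne_b1_d0 : b1 ≠ d0 := hne_class hcol_b1 hcol_d0
  have ne_b1_d1 : b1 ≠ d1 := hne_class hcol_b1 hcol_d1
  have ne_b1_e2 : b1 ≠ e2 := hne_class hcol_b1 hcol_e2
  have ne_b1_e3 : b1 ≠ e3 := hne_class hcol_b1 hcol_e3
  have ne_b2_c1 : b2 ≠ c1 := fun h => nc hbc ne_v0_b2 hv0b hv0c hbb2.symm (by rw [h]; exact hcc1.symm)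
  have ne_b2_c2 : b2 ≠ c2 := fun h => nc hbc ne_v0_b2 hv0b hv0c hbb2.symm (by rw [h]; exact hcc2.symm)
  have ne_b2_d0 : b2 ≠ d0 := hne_class hcol_b2 hcol_d0
  have ne_b2_d1 : b2 ≠ d1 := hne_class hcol_b2 hcol_d1
  have ne_b2_e2 : b2 ≠ e2 := hne_class hcol_b2 hcol_e2
  have ne_b2_e3 : b2 ≠ e3 := hne_class hcol_b2 hcol_e3
  have ne_c1_c2 : c1 ≠ c2 := hc12
  have ne_c1_d0 : c1 ≠ d0 := hne_class hcol_c1 hcol_d0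
  have ne_c1_d1 : c1 ≠ d1 := hne_class hcol_c1 hcol_d1
  have ne_c1_e2 : c1 ≠ e2 := hne_class hcol_c1 hcol_e2
  have ne_c1_e3 : c1 ≠ e3 := hne_class hcol_c1 hcol_e3
  have ne_c2_d0 : c2 ≠ d0 := hne_class hcol_c2 hcol_d0
  have ne_c2_d1 : c2 ≠ d1 := hne_class hcol_c2 hcol_d1
  have ne_c2_e2 : c2 ≠ e2 := hne_class hcol_c2 hcol_e2
  have ne_c2_e3 : c2 ≠ e3 := hne_class hcol_c2 hcol_e3
  have ne_d0_d1 : d0 ≠ d1 := hd01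
  have ne_d0_e2 : d0 ≠ e2 := fun h => nc ha12 ne_a_d0 haa1 haa2 ha1d0.symm (by rw [h]; exact ha2e2.symm)
  have ne_d0_e3 : d0 ≠ e3 := fun h => nc ha12 ne_a_d0 haa1 haa2 ha1d0.symm (by rw [h]; exact ha2e3.symm)
  have ne_d1_e2 : d1 ≠ e2 := fun h => nc ha12 ne_a_d1 haa1 haa2 ha1d1.symm (by rw [h]; exact ha2e2.symm)
  have ne_d1_e3 : d1 ≠ e3 := fun h => nc ha12 ne_a_d1 haa1 haa2 ha1d1.symm (by rw [h]; exact ha2e3.symm)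
  have ne_e2_e3 : e2 ≠ e3 := he23
  -- the fourteen vertices cover V
  have hnodup : ([v0,a,b,c,a1,a2,b1,b2,c1,c2,d0,d1,e2,e3] : List V).Nodup := by
    simp only [List.nodup_cons, List.mem_cons, List.not_mem_nil, or_false,
      List.nodup_nil, and_true, not_or]
    repeat' apply And.intro
    all_goals first | assumption | exact not_false
  have hcover : ∀ x : V, x = v0 ∨ x = a ∨ x = b ∨ x = c ∨ x = a1 ∨ x = a2 ∨ x = b1 ∨
      x = b2 ∨ x = c1 ∨ x = c2 ∨ x = d0 ∨ x = d1 ∨ x = e2 ∨ x = e3 := by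
    have hL : ([v0,a,b,c,a1,a2,b1,b2,c1,c2,d0,d1,e2,e3] : List V).toFinset.card = 14 := by
      rw [List.toFinset_card_of_nodup hnodup]
      rfl
    have huniv : ([v0,a,b,c,a1,a2,b1,b2,c1,c2,d0,d1,e2,e3] : List V).toFinset = Finset.univ :=
      Finset.eq_of_subset_of_card_le (Finset.subset_univ _)
        (by rw [hL, Finset.card_univ, hcard])
    intro x
    have hx : x ∈ ([v0,a,b,c,a1,a2,b1,b2,c1,c2,d0,d1,e2,e3] : List V).toFinset := by
      rw [huniv]; exact Finset.mem_univ x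
    simpa using hx
  -- Step 2: neighbors of d0
  have hsubd0 : G.neighborFinset d0 ⊆ {a1, b1, b2, c1, c2} := by
    intro x hx
    have hadj : G.Adj d0 x := (G.mem_neighborFinset d0 x).1 hx
    simp only [Finset.mem_insert, Finset.mem_singleton]
    rcases hcover x with rfl|rfl|rfl|rfl|rfl|rfl|rfl|rfl|rfl|rfl|rfl|rfl|rfl|rfl
    · exact absurd hadj.symm (notadj_of_nbhd hNv0 hd0a ne_b_d0.symm ne_c_d0.symm)
    · exact absurd hadj.symm (notadj_of_nbhd hNa ne_v0_d0.symm ne_a1_d0.symm ne_a2_d0.symm)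
    · exact absurd hadj.symm (notadj_of_nbhd hNb ne_v0_d0.symm ne_b1_d0.symm ne_b2_d0.symm)
    · exact absurd hadj.symm (notadj_of_nbhd hNc ne_v0_d0.symm ne_c1_d0.symm ne_c2_d0.symm)
    · exact Or.inl rfl
    · exact absurd hadj (fun h => nc ha12 ne_a_d0 haa1 haa2 ha1d0.symm h)
    · exact Or.inr (Or.inl rfl)
    · exact Or.inr (Or.inr (Or.inl rfl))
    · exact Or.inr (Or.inr (Or.inr (Or.inl rfl)))
    · exact Or.inr (Or.inr (Or.inr (Or.inr rfl)))
    · exact absurd hadj (G.loopless.irrefl _)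
    · exact absurd hadj (fun h => tf ha1d0 h ha1d1)
    · exact absurd hadj (hsame2 hcol_d0 hcol_e2)
    · exact absurd hadj (hsame2 hcol_d0 hcol_e3)
  have hnotb12 : ¬(b1 ∈ G.neighborFinset d0 ∧ b2 ∈ G.neighborFinset d0) := fun h =>
    nc hb12 ne_b_d0 hbb1 hbb2 ((G.mem_neighborFinset d0 b1).1 h.1)
      ((G.mem_neighborFinset d0 b2).1 h.2)
  have hnotc12 : ¬(c1 ∈ G.neighborFinset d0 ∧ c2 ∈ G.neighborFinset d0) := fun h =>
    nc hc12 ne_c_d0 hcc1 hcc2 ((G.mem_neighborFinset d0 c1).1 h.1)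
      ((G.mem_neighborFinset d0 c2).1 h.2)
  obtain ⟨bb, cc, hbb, hcc, hbbmem, hccmem, hNd0⟩ :=
    pick3 hsubd0 (hdeg d0) ((G.mem_neighborFinset d0 a1).2 ha1d0.symm) hnotb12 hnotc12
  have hd0bb : G.Adj d0 bb := (G.mem_neighborFinset d0 bb).1 hbbmem
  have hd0cc : G.Adj d0 cc := (G.mem_neighborFinset d0 cc).1 hccmem
  obtain ⟨ned_a1bb, ned_a1cc, ned_bbcc⟩ := three_ne (hNd0 ▸ hdeg d0)
  have memD0 : ∀ x, G.Adj d0 x → (x = a1 ∨ x = bb ∨ x = cc) := mem_of_nbhd hNd0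
  obtain ⟨neb1, neb2, neb3⟩ := three_ne (hNb ▸ hdeg b)
  obtain ⟨nec1, nec2, nec3⟩ := three_ne (hNc ▸ hdeg c)
  have memBB : ∀ x, G.Adj b x → (x = v0 ∨ x = b1 ∨ x = b2) := mem_of_nbhd hNb
  have memCC : ∀ x, G.Adj c x → (x = v0 ∨ x = c1 ∨ x = c2) := mem_of_nbhd hNc
  clear hbbmem hccmem hsubd0 hnotb12 hnotc12 hNd0 hNb hNc
  -- rename the two pairs so that d0 is adjacent to the first element of each
  obtain ⟨B1, B2, C1, C2, memB, memC, memD0', hbB1, hbB2, hcC1, hcC2, hd0B1, hd0C1,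
      neb_v0B1, neb_v0B2, neb_B1B2, nec_v0C1, nec_v0C2, nec_C1C2,
      ned_a1B1, ned_a1C1, ned_B1C1, hcov2⟩ :
      ∃ B1 B2 C1 C2, (∀ x, G.Adj b x → (x = v0 ∨ x = B1 ∨ x = B2)) ∧
        (∀ x, G.Adj c x → (x = v0 ∨ x = C1 ∨ x = C2)) ∧
        (∀ x, G.Adj d0 x → (x = a1 ∨ x = B1 ∨ x = C1)) ∧
        G.Adj b B1 ∧ G.Adj b B2 ∧ G.Adj c C1 ∧ G.Adj c C2 ∧ G.Adj d0 B1 ∧ G.Adj d0 C1 ∧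
        v0 ≠ B1 ∧ v0 ≠ B2 ∧ B1 ≠ B2 ∧ v0 ≠ C1 ∧ v0 ≠ C2 ∧ C1 ≠ C2 ∧
        a1 ≠ B1 ∧ a1 ≠ C1 ∧ B1 ≠ C1 ∧
        (∀ x : V, x = v0 ∨ x = a ∨ x = b ∨ x = c ∨ x = a1 ∨ x = a2 ∨ x = B1 ∨ x = B2 ∨
          x = C1 ∨ x = C2 ∨ x = d0 ∨ x = d1 ∨ x = e2 ∨ x = e3) := by
    rcases hbb with rfl | rfl <;> rcases hcc with rfl | rfl
    · exact ⟨bb, b2, cc, c2, memBB, memCC, memD0, hbb1, hbb2, hcc1, hcc2, hd0bb, hd0cc,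
        neb1, neb2, neb3, nec1, nec2, nec3, ned_a1bb, ned_a1cc, ned_bbcc, hcover⟩
    · exact ⟨bb, b2, cc, c1, memBB, fun x hx => or3_swap23 (memCC x hx), memD0,
        hbb1, hbb2, hcc2, hcc1, hd0bb, hd0cc, neb1, neb2, neb3, nec2, nec1, nec3.symm,
        ned_a1bb, ned_a1cc, ned_bbcc, fun x => or14_swap910 (hcover x)⟩
    · exact ⟨bb, b1, cc, c2, fun x hx => or3_swap23 (memBB x hx), memCC, memD0,
        hbb2, hbb1, hcc1, hcc2, hd0bb, hd0cc, neb2, neb1, neb3.symm, nec1, nec2, nec3,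
        ned_a1bb, ned_a1cc, ned_bbcc, fun x => or14_swap78 (hcover x)⟩
    · exact ⟨bb, b1, cc, c1, fun x hx => or3_swap23 (memBB x hx),
        fun x hx => or3_swap23 (memCC x hx), memD0, hbb2, hbb1, hcc2, hcc1, hd0bb, hd0cc,
        neb2, neb1, neb3.symm, nec2, nec1, nec3.symm, ned_a1bb, ned_a1cc, ned_bbcc,
        fun x => or14_swap910 (or14_swap78 (hcover x))⟩
  clear memBB memCC memD0 hbb1 hbb2 hcc1 hcc2 hd0bb hd0cc neb1 neb2 neb3 nec1 nec2 nec3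
    ned_a1bb ned_a1cc ned_bbcc hcover
  -- basic facts for the renamed vertices
  have hcolB1 : C B1 = C v0 := col2 hbB1.symm hv0b.symm
  have hcolB2 : C B2 = C v0 := col2 hbB2.symm hv0b.symm
  have hcolC1 : C C1 = C v0 := col2 hcC1.symm hv0c.symm
  have hcolC2 : C C2 = C v0 := col2 hcC2.symm hv0c.symm
  have neB1a : B1 ≠ a := fun h => tf hv0b (h ▸ hbB1) hv0a
  have neB1b : B1 ≠ b := (G.ne_of_adj hbB1).symm
  have neB1c : B1 ≠ c := fun h => tf hv0b (h ▸ hbB1) hv0c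
  have neB2a : B2 ≠ a := fun h => tf hv0b (h ▸ hbB2) hv0a
  have neB2b : B2 ≠ b := (G.ne_of_adj hbB2).symm
  have neB2c : B2 ≠ c := fun h => tf hv0b (h ▸ hbB2) hv0c
  have neC1a : C1 ≠ a := fun h => tf hv0c (h ▸ hcC1) hv0a
  have neC1b : C1 ≠ b := fun h => tf hv0c (h ▸ hcC1) hv0b
  have neC1c : C1 ≠ c := (G.ne_of_adj hcC1).symm
  have neC2a : C2 ≠ a := fun h => tf hv0c (h ▸ hcC2) hv0a
  have neC2b : C2 ≠ b := fun h => tf hv0c (h ▸ hcC2) hv0b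
  have neC2c : C2 ≠ c := (G.ne_of_adj hcC2).symm
  have neB1a1 : B1 ≠ a1 := fun h => nc hab ne_v0_a1 hv0a hv0b haa1.symm (h ▸ hbB1).symm
  have neB1a2 : B1 ≠ a2 := fun h => nc hab ne_v0_a2 hv0a hv0b haa2.symm (h ▸ hbB1).symm
  have neB2a1 : B2 ≠ a1 := fun h => nc hab ne_v0_a1 hv0a hv0b haa1.symm (h ▸ hbB2).symm
  have neB2a2 : B2 ≠ a2 := fun h => nc hab ne_v0_a2 hv0a hv0b haa2.symm (h ▸ hbB2).symm
  have neC1a1 : C1 ≠ a1 := fun h => nc hac ne_v0_a1 hv0a hv0c haa1.symm (h ▸ hcC1).symm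
  have neC1a2 : C1 ≠ a2 := fun h => nc hac ne_v0_a2 hv0a hv0c haa2.symm (h ▸ hcC1).symm
  have neC2a1 : C2 ≠ a1 := fun h => nc hac ne_v0_a1 hv0a hv0c haa1.symm (h ▸ hcC2).symm
  have neC2a2 : C2 ≠ a2 := fun h => nc hac ne_v0_a2 hv0a hv0c haa2.symm (h ▸ hcC2).symm
  have neB1C2 : B1 ≠ C2 := fun h =>
    nc hbc neb_v0B1 hv0b hv0c hbB1.symm (by rw [h]; exact hcC2.symm)
  have neB2C1 : B2 ≠ C1 := fun h =>
    nc hbc neb_v0B2 hv0b hv0c hbB2.symm (by rw [h]; exact hcC1.symm)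
  have neB2C2 : B2 ≠ C2 := fun h =>
    nc hbc neb_v0B2 hv0b hv0c hbB2.symm (by rw [h]; exact hcC2.symm)
  have ned1B1 : d1 ≠ B1 := (hne_class hcolB1 hcol_d1).symm
  have ned1B2 : d1 ≠ B2 := (hne_class hcolB2 hcol_d1).symm
  have ned1C1 : d1 ≠ C1 := (hne_class hcolC1 hcol_d1).symm
  have ned1C2 : d1 ≠ C2 := (hne_class hcolC2 hcol_d1).symm
  have hB1b : G.Adj B1 b := hbB1.symm
  have hB1d0 : G.Adj B1 d0 := hd0B1.symm
  have hC1c : G.Adj C1 c := hcC1.symm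
  have hC1d0 : G.Adj C1 d0 := hd0C1.symm
  -- Step 3: neighbors of B1
  have hsubB1 : G.neighborFinset B1 ⊆ {b, d0, e2, e3} := by
    intro x hx
    have hadj : G.Adj B1 x := (G.mem_neighborFinset B1 x).1 hx
    simp only [Finset.mem_insert, Finset.mem_singleton]
    rcases hcov2 x with rfl|rfl|rfl|rfl|rfl|rfl|rfl|rfl|rfl|rfl|rfl|rfl|rfl|rfl
    · exact absurd hadj.symm (notadj_of_nbhd hNv0 neB1a neB1b neB1c)
    · exact absurd hadj.symm (notadj_of_nbhd hNa neb_v0B1.symm neB1a1 neB1a2)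
    · exact Or.inl rfl
    · exact absurd hadj.symm (notadj_of_mem memC neb_v0B1.symm ned_B1C1 neB1C2)
    · exact absurd hadj (hsame1 hcolB1 hcol_a1)
    · exact absurd hadj (hsame1 hcolB1 hcol_a2)
    · exact absurd hadj (G.loopless.irrefl _)
    · exact absurd hadj (fun h => tf hbB1 h hbB2)
    · exact absurd hadj (hsame1 hcolB1 hcolC1)
    · exact absurd hadj (hsame1 hcolB1 hcolC2)
    · exact Or.inr (Or.inl rfl)
    · exact absurd hadj (fun h => nc hd01 ned_a1B1 ha1d0 ha1d1 hB1d0 h)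
    · exact Or.inr (Or.inr (Or.inl rfl))
    · exact Or.inr (Or.inr (Or.inr rfl))
  have hnote23 : ¬(e2 ∈ G.neighborFinset B1 ∧ e3 ∈ G.neighborFinset B1) := fun h =>
    nc he23 neB1a2.symm ha2e2 ha2e3 ((G.mem_neighborFinset B1 e2).1 h.1)
      ((G.mem_neighborFinset B1 e3).1 h.2)
  obtain ⟨dd, hdd, hddmem, hNB1⟩ := pick1 hsubB1 (hdeg B1)
    ((G.mem_neighborFinset B1 b).2 hB1b) ((G.mem_neighborFinset B1 d0).2 hB1d0) hnote23
  have hB1dd : G.Adj B1 dd := (G.mem_neighborFinset B1 dd).1 hddmem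
  have memBB1 : ∀ x, G.Adj B1 x → (x = b ∨ x = d0 ∨ x = dd) := mem_of_nbhd hNB1
  obtain ⟨nea2x1, nea2x2, nea2x3⟩ := three_ne (hNa2 ▸ hdeg a2)
  have memA2 : ∀ x, G.Adj a2 x → (x = a ∨ x = e2 ∨ x = e3) := mem_of_nbhd hNa2
  clear hddmem hsubB1 hnote23 hNB1 hNa2
  obtain ⟨D2, D3, memA2', ha2D2, ha2D3, nea2_aD2, nea2_aD3, nea2_D2D3, memB1, hB1D2, hcov3⟩ :
      ∃ D2 D3, (∀ x, G.Adj a2 x → (x = a ∨ x = D2 ∨ x = D3)) ∧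
        G.Adj a2 D2 ∧ G.Adj a2 D3 ∧ a ≠ D2 ∧ a ≠ D3 ∧ D2 ≠ D3 ∧
        (∀ x, G.Adj B1 x → (x = b ∨ x = d0 ∨ x = D2)) ∧ G.Adj B1 D2 ∧
        (∀ x : V, x = v0 ∨ x = a ∨ x = b ∨ x = c ∨ x = a1 ∨ x = a2 ∨ x = B1 ∨ x = B2 ∨
          x = C1 ∨ x = C2 ∨ x = d0 ∨ x = d1 ∨ x = D2 ∨ x = D3) := by
    rcases hdd with rfl | rfl
    · exact ⟨dd, e3, memA2, ha2e2, ha2e3, nea2x1, nea2x2, nea2x3, memBB1, hB1dd, hcov2⟩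
    · exact ⟨dd, e2, fun x hx => or3_swap23 (memA2 x hx), ha2e3, ha2e2, nea2x2, nea2x1,
        nea2x3.symm, memBB1, hB1dd, fun x => or14_swap1314 (hcov2 x)⟩
  clear memA2 ha2e2 ha2e3 nea2x1 nea2x2 nea2x3 memBB1 hB1dd hcov2
  have hcolD2 : C D2 = C a := col2 ha2D2.symm haa2.symm
  have hcolD3 : C D3 = C a := col2 ha2D3.symm haa2.symm
  have ned1D2 : d1 ≠ D2 := fun h =>
    nc ha12 ne_a_d1 haa1 haa2 ha1d1.symm (by rw [h]; exact ha2D2.symm)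
  have ned1D3 : d1 ≠ D3 := fun h =>
    nc ha12 ne_a_d1 haa1 haa2 ha1d1.symm (by rw [h]; exact ha2D3.symm)
  have ned0D2 : d0 ≠ D2 := fun h =>
    nc ha12 ne_a_d0 haa1 haa2 ha1d0.symm (by rw [h]; exact ha2D2.symm)
  have ned0D3 : d0 ≠ D3 := fun h =>
    nc ha12 ne_a_d0 haa1 haa2 ha1d0.symm (by rw [h]; exact ha2D3.symm)
  have nebD2 : b ≠ D2 := fun h => nc hab ne_v0_a2 hv0a hv0b haa2.symm (by rw [h]; exact ha2D2)
  have nebD3 : b ≠ D3 := fun h => nc hab ne_v0_a2 hv0a hv0b haa2.symm (by rw [h]; exact ha2D3)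
  have necD2 : c ≠ D2 := fun h => nc hac ne_v0_a2 hv0a hv0c haa2.symm (by rw [h]; exact ha2D2)
  have necD3 : c ≠ D3 := fun h => nc hac ne_v0_a2 hv0a hv0c haa2.symm (by rw [h]; exact ha2D3)
  -- Step 4: neighbors of C1
  have hsubC1 : G.neighborFinset C1 ⊆ {c, d0, D2, D3} := by
    intro x hx
    have hadj : G.Adj C1 x := (G.mem_neighborFinset C1 x).1 hx
    simp only [Finset.mem_insert, Finset.mem_singleton]
    rcases hcov3 x with rfl|rfl|rfl|rfl|rfl|rfl|rfl|rfl|rfl|rfl|rfl|rfl|rfl|rfl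
    · exact absurd hadj.symm (notadj_of_nbhd hNv0 neC1a neC1b neC1c)
    · exact absurd hadj.symm (notadj_of_nbhd hNa nec_v0C1.symm neC1a1 neC1a2)
    · exact absurd hadj.symm (notadj_of_mem memB nec_v0C1.symm ned_B1C1.symm neB2C1.symm)
    · exact Or.inl rfl
    · exact absurd hadj (hsame1 hcolC1 hcol_a1)
    · exact absurd hadj (hsame1 hcolC1 hcol_a2)
    · exact absurd hadj (hsame1 hcolC1 hcolB1)
    · exact absurd hadj (hsame1 hcolC1 hcolB2)
    · exact absurd hadj (G.loopless.irrefl _)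
    · exact absurd hadj (fun h => tf hcC1 h hcC2)
    · exact Or.inr (Or.inl rfl)
    · exact absurd hadj (fun h => nc hd01 ned_a1C1 ha1d0 ha1d1 hC1d0 h)
    · exact Or.inr (Or.inr (Or.inl rfl))
    · exact Or.inr (Or.inr (Or.inr rfl))
  have hnotD23 : ¬(D2 ∈ G.neighborFinset C1 ∧ D3 ∈ G.neighborFinset C1) := fun h =>
    nc nea2_D2D3 neC1a2.symm ha2D2 ha2D3 ((G.mem_neighborFinset C1 D2).1 h.1)
      ((G.mem_neighborFinset C1 D3).1 h.2)
  obtain ⟨yy, hyy, hyymem, hNC1⟩ := pick1 hsubC1 (hdeg C1)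
    ((G.mem_neighborFinset C1 c).2 hC1c) ((G.mem_neighborFinset C1 d0).2 hC1d0) hnotD23
  have hyyD3 : D3 = yy := by
    rcases hyy with rfl | rfl
    · exact absurd ((G.mem_neighborFinset C1 yy).1 hyymem)
        (fun h => nc ned0D2 ned_B1C1 hB1d0 hB1D2 hC1d0 h)
    · rfl
  subst hyyD3
  have hC1D3 : G.Adj C1 D3 := (G.mem_neighborFinset C1 D3).1 hyymem
  have memC1 : ∀ x, G.Adj C1 x → (x = c ∨ x = d0 ∨ x = D3) := mem_of_nbhd hNC1
  clear hyy hyymem hsubC1 hnotD23 hNC1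
  -- Step 5: neighbors of B2
  have memB2 : ∀ x, G.Adj B2 x → (x = b ∨ x = d1 ∨ x = D3) := by
    intro x hadj
    rcases hcov3 x with rfl|rfl|rfl|rfl|rfl|rfl|rfl|rfl|rfl|rfl|rfl|rfl|rfl|rfl
    · exact absurd hadj.symm (notadj_of_nbhd hNv0 neB2a neB2b neB2c)
    · exact absurd hadj.symm (notadj_of_nbhd hNa neb_v0B2.symm neB2a1 neB2a2)
    · exact Or.inl rfl
    · exact absurd hadj.symm (notadj_of_mem memC neb_v0B2.symm neB2C1 neB2C2)
    · exact absurd hadj (hsame1 hcolB2 hcol_a1)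
    · exact absurd hadj (hsame1 hcolB2 hcol_a2)
    · exact absurd hadj (fun h => tf hbB2 h hbB1)
    · exact absurd hadj (G.loopless.irrefl _)
    · exact absurd hadj (hsame1 hcolB2 hcolC1)
    · exact absurd hadj (hsame1 hcolB2 hcolC2)
    · exact absurd hadj.symm (notadj_of_mem memD0' neB2a1 neb_B1B2.symm neB2C1)
    · exact Or.inr (Or.inl rfl)
    · exact absurd hadj (fun h => nc neb_B1B2 nebD2 hbB1 hbB2 hB1D2.symm h.symm)
    · exact Or.inr (Or.inr rfl)
  have hsubB2 : G.neighborFinset B2 ⊆ {b, d1, D3} := by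
    intro t ht
    simp only [Finset.mem_insert, Finset.mem_singleton]
    exact memB2 t ((G.mem_neighborFinset B2 t).1 ht)
  have hNB2 : G.neighborFinset B2 = {b, d1, D3} := eq3 hsubB2 (hdeg B2)
  have hB2d1 : G.Adj B2 d1 := (adj_of_nbhd hNB2).2.1
  have hB2D3 : G.Adj B2 D3 := (adj_of_nbhd hNB2).2.2
  clear hsubB2 hNB2
  -- Step 6: neighbors of C2
  have memC2 : ∀ x, G.Adj C2 x → (x = c ∨ x = d1 ∨ x = D2) := by
    intro x hadj
    rcases hcov3 x with rfl|rfl|rfl|rfl|rfl|rfl|rfl|rfl|rfl|rfl|rfl|rfl|rfl|rfl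
    · exact absurd hadj.symm (notadj_of_nbhd hNv0 neC2a neC2b neC2c)
    · exact absurd hadj.symm (notadj_of_nbhd hNa nec_v0C2.symm neC2a1 neC2a2)
    · exact absurd hadj.symm (notadj_of_mem memB nec_v0C2.symm neB1C2.symm neB2C2.symm)
    · exact Or.inl rfl
    · exact absurd hadj (hsame1 hcolC2 hcol_a1)
    · exact absurd hadj (hsame1 hcolC2 hcol_a2)
    · exact absurd hadj (hsame1 hcolC2 hcolB1)
    · exact absurd hadj (hsame1 hcolC2 hcolB2)
    · exact absurd hadj (fun h => tf hcC2 h hcC1)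
    · exact absurd hadj (G.loopless.irrefl _)
    · exact absurd hadj.symm (notadj_of_mem memD0' neC2a1 neB1C2.symm nec_C1C2.symm)
    · exact Or.inr (Or.inl rfl)
    · exact Or.inr (Or.inr rfl)
    · exact absurd hadj (fun h => nc nec_C1C2 necD3 hcC1 hcC2 hC1D3.symm h.symm)
  have hC2d1 : G.Adj C2 d1 := by
    by_contra hcon
    have hsub : G.neighborFinset C2 ⊆ {c, D2} := by
      intro t ht
      have := memC2 t ((G.mem_neighborFinset C2 t).1 ht)
      simp only [Finset.mem_insert, Finset.mem_singleton]
      rcases this with rfl | rfl | rfl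
      · exact Or.inl rfl
      · exact absurd ((G.mem_neighborFinset C2 t).1 ht) hcon
      · exact Or.inr rfl
    have h1 := Finset.card_le_card hsub
    have h2 : ({c, D2} : Finset V).card ≤ 2 := card_le_two
    have h3 := hdeg C2
    omega
  have hC2D2 : G.Adj C2 D2 := by
    by_contra hcon
    have hsub : G.neighborFinset C2 ⊆ {c, d1} := by
      intro t ht
      have := memC2 t ((G.mem_neighborFinset C2 t).1 ht)
      simp only [Finset.mem_insert, Finset.mem_singleton]
      rcases this with rfl | rfl | rfl
      · exact Or.inl rfl
      · exact Or.inr rfl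
      · exact absurd ((G.mem_neighborFinset C2 t).1 ht) hcon
    have h1 := Finset.card_le_card hsub
    have h2 : ({c, d1} : Finset V).card ≤ 2 := card_le_two
    have h3 := hdeg C2
    omega
  -- Step 7: neighbors of d1
  have memd1 : ∀ x, G.Adj d1 x → (x = a1 ∨ x = B2 ∨ x = C2) := by
    intro x hadj
    rcases hcov3 x with rfl|rfl|rfl|rfl|rfl|rfl|rfl|rfl|rfl|rfl|rfl|rfl|rfl|rfl
    · exact absurd hadj.symm (notadj_of_nbhd hNv0 hd1a ne_b_d1.symm ne_c_d1.symm)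
    · exact absurd hadj.symm (notadj_of_nbhd hNa ne_v0_d1.symm ne_a1_d1.symm ne_a2_d1.symm)
    · exact absurd hadj.symm (notadj_of_mem memB ne_v0_d1.symm ned1B1 ned1B2)
    · exact absurd hadj.symm (notadj_of_mem memC ne_v0_d1.symm ned1C1 ned1C2)
    · exact Or.inl rfl
    · exact absurd hadj (fun h => nc ha12 ne_a_d1 haa1 haa2 ha1d1.symm h)
    · exact absurd hadj.symm (notadj_of_mem memB1 ne_b_d1.symm hd01.symm ned1D2)
    · exact Or.inr (Or.inl rfl)
    · exact absurd hadj.symm (notadj_of_mem memC1 ne_c_d1.symm hd01.symm ned1D3)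
    · exact Or.inr (Or.inr rfl)
    · exact absurd hadj (fun h => tf ha1d1 h ha1d0)
    · exact absurd hadj (G.loopless.irrefl _)
    · exact absurd hadj (hsame2 hcol_d1 hcolD2)
    · exact absurd hadj (hsame2 hcol_d1 hcolD3)
  -- Steps 8-9: neighbors of D2 and D3 (memberships already known)
  -- final neighbor finsets, in the labelling order
  have hNd0F : G.neighborFinset d0 = {a1, B1, C1} := nbhd_of_mem memD0' (hdeg d0)
  have hNB1F : G.neighborFinset B1 = {b, d0, D2} := nbhd_of_mem memB1 (hdeg B1)
  have hNbF : G.neighborFinset b = {v0, B1, B2} := nbhd_of_mem (fun x hx => memB x hx) (hdeg b)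
  have hNB2F : G.neighborFinset B2 = {b, d1, D3} := nbhd_of_mem memB2 (hdeg B2)
  have hNd1F : G.neighborFinset d1 = {a1, B2, C2} := nbhd_of_mem memd1 (hdeg d1)
  have hNC2F : G.neighborFinset C2 = {c, d1, D2} := nbhd_of_mem memC2 (hdeg C2)
  have hND2F : G.neighborFinset D2 = {a2, B1, C2} := by
    refine eq3' ?_ (hdeg D2) neB1a2.symm neC2a2.symm neB1C2
    intro t ht
    simp only [Finset.mem_insert, Finset.mem_singleton] at ht
    rcases ht with rfl | rfl | rfl
    · exact (G.mem_neighborFinset D2 t).2 ha2D2.symm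
    · exact (G.mem_neighborFinset D2 t).2 hB1D2.symm
    · exact (G.mem_neighborFinset D2 t).2 hC2D2.symm
  have hNa2F : G.neighborFinset a2 = {a, D2, D3} := nbhd_of_mem memA2' (hdeg a2)
  have hND3F : G.neighborFinset D3 = {a2, B2, C1} := by
    refine eq3' ?_ (hdeg D3) neB2a2.symm neC1a2.symm neB2C1
    intro t ht
    simp only [Finset.mem_insert, Finset.mem_singleton] at ht
    rcases ht with rfl | rfl | rfl
    · exact (G.mem_neighborFinset D3 t).2 ha2D3.symm
    · exact (G.mem_neighborFinset D3 t).2 hB2D3.symm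
    · exact (G.mem_neighborFinset D3 t).2 hC1D3.symm
  have hNC1F : G.neighborFinset C1 = {c, d0, D3} := nbhd_of_mem memC1 (hdeg C1)
  have hNcF : G.neighborFinset c = {v0, C1, C2} := nbhd_of_mem (fun x hx => memC x hx) (hdeg c)
  -- Step 10: build the isomorphism
  have huniv2 : ([v0,a,a1,d0,B1,b,B2,d1,C2,D2,a2,D3,C1,c] : List V).toFinset = Finset.univ :=
    Finset.eq_univ_iff_forall.2 (fun x => List.mem_toFinset.2 (by
      simp only [List.mem_cons, List.not_mem_nil, or_false]
      exact or14_to_g (hcov3 x)))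
  have hnodup2 : ([v0,a,a1,d0,B1,b,B2,d1,C2,D2,a2,D3,C1,c] : List V).Nodup := by
    have h1 : ([v0,a,a1,d0,B1,b,B2,d1,C2,D2,a2,D3,C1,c] : List V).dedup.length = 14 := by
      rw [← List.card_toFinset, huniv2, Finset.card_univ, hcard]
    have h3 := (List.dedup_sublist ([v0,a,a1,d0,B1,b,B2,d1,C2,D2,a2,D3,C1,c] : List V)).eq_of_length (by rw [h1]; rfl)
    rw [← h3]
    exact ([v0,a,a1,d0,B1,b,B2,d1,C2,D2,a2,D3,C1,c] : List V).nodup_dedup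
  let g : ZMod 14 → V := fun i => ([v0,a,a1,d0,B1,b,B2,d1,C2,D2,a2,D3,C1,c] : List V).get i
  have ginj : Function.Injective g := fun i j h => List.nodup_iff_injective_get.1 hnodup2 h
  have gbij : Function.Bijective g :=
    (Fintype.bijective_iff_injective_and_card g).2 ⟨ginj, by rw [hcard]; exact ZMod.card 14⟩
  have hdecN : ∀ i j : ZMod 14, j ∈ heawoodNbrs i ↔ heawood.Adj i j := by decide
  have hNB : ∀ i : ZMod 14, G.neighborFinset (g i) = (heawoodNbrs i).image g := by
    intro i
    fin_cases i
    · show G.neighborFinset v0 = Finset.image g ({1,5,13} : Finset (ZMod 14))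
      rw [hNv0]; simp only [Finset.image_insert, Finset.image_singleton]; rfl
    · show G.neighborFinset a = Finset.image g ({0,2,10} : Finset (ZMod 14))
      rw [hNa]; simp only [Finset.image_insert, Finset.image_singleton]; rfl
    · show G.neighborFinset a1 = Finset.image g ({1,3,7} : Finset (ZMod 14))
      rw [hNa1]; simp only [Finset.image_insert, Finset.image_singleton]; rfl
    · show G.neighborFinset d0 = Finset.image g ({2,4,12} : Finset (ZMod 14))
      rw [hNd0F]; simp only [Finset.image_insert, Finset.image_singleton]; rfl
    · show G.neighborFinset B1 = Finset.image g ({5,3,9} : Finset (ZMod 14))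
      rw [hNB1F]; simp only [Finset.image_insert, Finset.image_singleton]; rfl
    · show G.neighborFinset b = Finset.image g ({0,4,6} : Finset (ZMod 14))
      rw [hNbF]; simp only [Finset.image_insert, Finset.image_singleton]; rfl
    · show G.neighborFinset B2 = Finset.image g ({5,7,11} : Finset (ZMod 14))
      rw [hNB2F]; simp only [Finset.image_insert, Finset.image_singleton]; rfl
    · show G.neighborFinset d1 = Finset.image g ({2,6,8} : Finset (ZMod 14))
      rw [hNd1F]; simp only [Finset.image_insert, Finset.image_singleton]; rfl
    · show G.neighborFinset C2 = Finset.image g ({13,7,9} : Finset (ZMod 14))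
      rw [hNC2F]; simp only [Finset.image_insert, Finset.image_singleton]; rfl
    · show G.neighborFinset D2 = Finset.image g ({10,4,8} : Finset (ZMod 14))
      rw [hND2F]; simp only [Finset.image_insert, Finset.image_singleton]; rfl
    · show G.neighborFinset a2 = Finset.image g ({1,9,11} : Finset (ZMod 14))
      rw [hNa2F]; simp only [Finset.image_insert, Finset.image_singleton]; rfl
    · show G.neighborFinset D3 = Finset.image g ({10,6,12} : Finset (ZMod 14))
      rw [hND3F]; simp only [Finset.image_insert, Finset.image_singleton]; rfl
    · show G.neighborFinset C1 = Finset.image g ({13,3,11} : Finset (ZMod 14))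
      rw [hNC1F]; simp only [Finset.image_insert, Finset.image_singleton]; rfl
    · show G.neighborFinset c = Finset.image g ({0,12,8} : Finset (ZMod 14))
      rw [hNcF]; simp only [Finset.image_insert, Finset.image_singleton]; rfl
  have main : ∀ i j : ZMod 14, G.Adj (g i) (g j) ↔ heawood.Adj i j := by
    intro i j
    rw [← SimpleGraph.mem_neighborFinset, hNB i, Finset.mem_image]
    constructor
    · rintro ⟨k, hk, he⟩
      obtain rfl := ginj he
      exact (hdecN i _).1 hk
    · intro h
      exact ⟨j, (hdecN i j).2 h, rfl⟩
  exact ⟨(SimpleGraph.Iso.symm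
    { toEquiv := Equiv.ofBijective g gbij, map_rel_iff' := fun {i j} => main i j })⟩
end

section
/- In the Heawood graph, for any two distinct vertices u and v of ZMod 14: if u and v have the same parity (lie in the same part of the bipartition) then the distance between u and v is exactly 2, and if u and v have opposite parity (lie in opposite parts) then the distance between u and v is either 1 or 3. In particular the Heawood graph has diameter 3. -/
open SimpleGraph

lemma heawood_key : ∀ u v : ZMod 14, u ≠ v →
    ((Even u ↔ Even v) → ¬heawood.Adj u v ∧ ∃ w, heawood.Adj u w ∧ heawood.Adj w v) ∧
    (¬(Even u ↔ Even v) → heawood.Adj u v ∨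
      ((¬heawood.Adj u v ∧ ¬∃ w, heawood.Adj u w ∧ heawood.Adj w v) ∧
        ∃ w x, heawood.Adj u w ∧ heawood.Adj w x ∧ heawood.Adj x v)) := by decide

lemma walk2_common {V : Type*} {G : SimpleGraph V} {u v : V} (p : G.Walk u v)
    (h : p.length = 2) : ∃ w, G.Adj u w ∧ G.Adj w v := by
  cases p with
  | nil => simp at h
  | cons h1 q =>
    cases q with
    | nil => simp at h
    | cons h2 r =>
      cases r with
      | nil => exact ⟨_, h1, h2⟩
      | cons h3 s => simp [Walk.length_cons] at h

/-- In the Heawood graph, two distinct vertices of the same parity are at distance exactly 2,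
and two vertices of opposite parity are at distance 1 or 3; in particular the Heawood graph
has diameter 3. -/
theorem heawood_dist_and_diam :
    (∀ u v : ZMod 14, u ≠ v →
      ((Even u ↔ Even v) → heawood.dist u v = 2) ∧
      (¬ (Even u ↔ Even v) → heawood.dist u v = 1 ∨ heawood.dist u v = 3)) ∧
    heawood.diam = 3 := by
  have main : ∀ u v : ZMod 14, u ≠ v →
      ((Even u ↔ Even v) → heawood.dist u v = 2) ∧
      (¬ (Even u ↔ Even v) → heawood.dist u v = 1 ∨ heawood.dist u v = 3) := by
    intro u v huv
    constructor
    · intro hpar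
      obtain ⟨hna, w, h1, h2⟩ := (heawood_key u v huv).1 hpar
      have hle : heawood.dist u v ≤ 2 := by
        simpa using heawood.dist_le (Walk.cons h1 (Walk.cons h2 Walk.nil))
      have hr : heawood.Reachable u v := ⟨Walk.cons h1 (Walk.cons h2 Walk.nil)⟩
      have h0 : heawood.dist u v ≠ 0 := fun h => huv (hr.dist_eq_zero_iff.mp h)
      have h1' : heawood.dist u v ≠ 1 := fun h => hna (dist_eq_one_iff_adj.mp h)
      omega
    · intro hpar
      rcases (heawood_key u v huv).2 hpar with hadj | ⟨⟨hna, hno2⟩, w, x, a1, a2, a3⟩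
      · exact Or.inl (dist_eq_one_iff_adj.mpr hadj)
      · right
        have hle : heawood.dist u v ≤ 3 := by
          simpa using heawood.dist_le (Walk.cons a1 (Walk.cons a2 (Walk.cons a3 Walk.nil)))
        have hr : heawood.Reachable u v := ⟨Walk.cons a1 (Walk.cons a2 (Walk.cons a3 Walk.nil))⟩
        have h0 : heawood.dist u v ≠ 0 := fun h => huv (hr.dist_eq_zero_iff.mp h)
        have h1' : heawood.dist u v ≠ 1 := fun h => hna (dist_eq_one_iff_adj.mp h)
        have h2' : heawood.dist u v ≠ 2 := by
          intro h2
          obtain ⟨q, hq⟩ := exists_walk_of_dist_ne_zero (G := heawood) h0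
          exact hno2 (walk2_common q (by omega))
        omega
  refine ⟨main, ?_⟩
  have hediam : heawood.ediam ≤ 3 := by
    apply ediam_le_of_edist_le
    intro u v
    by_cases huv : u = v
    · subst huv; simp
    · rcases Decidable.em (Even u ↔ Even v) with hpar | hpar
      · obtain ⟨_, w, h1, h2⟩ := (heawood_key u v huv).1 hpar
        have := heawood.edist_le (Walk.cons h1 (Walk.cons h2 Walk.nil))
        simp only [Walk.length_cons, Walk.length_nil] at this
        exact le_trans this (by decide)
      · rcases (heawood_key u v huv).2 hpar with hadj | ⟨_, w, x, a1, a2, a3⟩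
        · have := heawood.edist_le hadj.toWalk
          simp at this
          exact le_trans this (by decide)
        · have := heawood.edist_le (Walk.cons a1 (Walk.cons a2 (Walk.cons a3 Walk.nil)))
          simp only [Walk.length_cons, Walk.length_nil] at this
          exact le_trans this (by decide)
  have hnetop : heawood.ediam ≠ ⊤ := by
    intro h; rw [h] at hediam; exact absurd hediam (by decide)
  have hub : heawood.diam ≤ 3 := by
    have := ENat.toNat_le_toNat hediam (by decide : (3 : ℕ∞) ≠ ⊤)
    simpa [SimpleGraph.diam] using this
  have hd03 : heawood.dist 0 3 = 3 := by
    have h := (main 0 3 (by decide)).2 (by decide)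
    rcases h with h | h
    · rw [dist_eq_one_iff_adj] at h
      exact absurd h (by decide)
    · exact h
  have hlb : 3 ≤ heawood.diam := hd03 ▸ dist_le_diam hnetop
  omega
end

section
/- Let u, v be vertices of the Heawood graph at distance exactly 3, and let u', v' be another pair of vertices of the Heawood graph at distance exactly 3. Then the graph obtained from the Heawood graph by adding the edge uv is isomorphic to the graph obtained from the Heawood graph by adding the edge u'v'. (This common graph is Cousin 89 of the E9+e family.) -/
open SimpleGraph

/-! ### Auxiliary material -/

private lemma tr_adj : ∀ c : ZMod 14, Even c → ∀ x y : ZMod 14,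
    heawood.Adj (x + c) (y + c) ↔ heawood.Adj x y := by decide

private lemma refl_adj : ∀ c : ZMod 14, ¬ Even c → ∀ x y : ZMod 14,
    heawood.Adj (c - x) (c - y) ↔ heawood.Adj x y := by decide

/-- Translation by an even constant is an automorphism of the Heawood graph. -/
def trIso (c : ZMod 14) (hc : Even c) : heawood ≃g heawood where
  toEquiv := Equiv.addRight c
  map_rel_iff' := by intro x y; exact tr_adj c hc x y

/-- Reflection `x ↦ c - x` for odd `c` is an automorphism of the Heawood graph. -/
def reflIso (c : ZMod 14) (hc : ¬ Even c) : heawood ≃g heawood where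
  toEquiv := Equiv.subLeft c
  map_rel_iff' := by intro x y; exact refl_adj c hc x y

/-- Interpret a table of 14 values as a function on `ZMod 14`. -/
def tab (l : Fin 14 → ZMod 14) : ZMod 14 → ZMod 14 := fun x => l ⟨x.val, x.val_lt⟩

/-- Four special automorphisms of the Heawood graph fixing `0` and sending `3` to
`3`, `7`, `9`, `11` respectively (one for each orbit of the dihedral group on
the distance-3 pairs). -/
def sigFun : Fin 4 → ZMod 14 → ZMod 14
  | 0 => tab ![0,1,2,3,4,5,6,7,8,9,10,11,12,13]
  | 1 => tab ![0,1,2,7,6,5,4,3,12,11,10,9,8,13]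
  | 2 => tab ![0,1,10,9,4,5,6,11,12,3,2,7,8,13]
  | 3 => tab ![0,1,10,11,6,5,4,9,8,7,2,3,12,13]

private lemma sig_invol : ∀ k : Fin 4, ∀ x, sigFun k (sigFun k x) = x := by decide

private lemma sig_adj : ∀ (k : Fin 4) (x y),
    heawood.Adj (sigFun k x) (sigFun k y) ↔ heawood.Adj x y := by decide

/-- The maps `sigFun k` as automorphisms of the Heawood graph. -/
def sigIso (k : Fin 4) : heawood ≃g heawood where
  toFun := sigFun k
  invFun := sigFun k
  left_inv := sig_invol k
  right_inv := sig_invol k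
  map_rel_iff' := by intro x y; exact sig_adj k x y

/-- Combinatorial characterisation of `dist = 3`. -/
def D3 (u v : ZMod 14) : Prop :=
  u ≠ v ∧ ¬ heawood.Adj u v ∧ (¬ ∃ w, heawood.Adj u w ∧ heawood.Adj w v) ∧
    ∃ w x, heawood.Adj u w ∧ heawood.Adj w x ∧ heawood.Adj x v

instance (u v : ZMod 14) : Decidable (D3 u v) := by unfold D3; infer_instance

def pairEq (a b u v : ZMod 14) : Prop := (a = u ∧ b = v) ∨ (a = v ∧ b = u)

instance (a b u v : ZMod 14) : Decidable (pairEq a b u v) := by unfold pairEq; infer_instance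

/-- Every pair at distance 3 is the image of the base pair `(0, 3)` under one of the
automorphisms built from `sigFun` followed by a translation or reflection. -/
private lemma main_orbit : ∀ u v : ZMod 14, D3 u v →
    ∃ (k : Fin 4) (c : ZMod 14),
      (Even c ∧ pairEq (sigFun k 0 + c) (sigFun k 3 + c) u v) ∨
      (¬ Even c ∧ pairEq (c - sigFun k 0) (c - sigFun k 3) u v) := by decide

/-- An automorphism transports the added-edge graph. -/
def isoAdd (e : heawood ≃g heawood) (a b : ZMod 14) :
    (heawood ⊔ fromEdgeSet {s(a, b)}) ≃g (heawood ⊔ fromEdgeSet {s(e a, e b)}) where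
  toEquiv := e.toEquiv
  map_rel_iff' := by
    intro x y
    show (heawood ⊔ fromEdgeSet {s(e a, e b)}).Adj (e x) (e y) ↔
      (heawood ⊔ fromEdgeSet {s(a, b)}).Adj x y
    simp only [sup_adj, fromEdgeSet_adj, Set.mem_singleton_iff, Sym2.eq_iff,
      e.map_rel_iff, ne_eq, EmbeddingLike.apply_eq_iff_eq]

private lemma dist3_D3 {u v : ZMod 14} (h : heawood.dist u v = 3) : D3 u v := by
  have hne : u ≠ v := by
    rintro rfl; rw [SimpleGraph.dist_self] at h; exact absurd h (by norm_num)
  have hreach : heawood.Reachable u v := by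
    by_contra hr
    rw [SimpleGraph.dist_eq_zero_iff_eq_or_not_reachable.mpr (Or.inr hr)] at h
    exact absurd h (by norm_num)
  refine ⟨hne, ?_, ?_, ?_⟩
  · intro ha
    have : heawood.dist u v ≤ 1 := SimpleGraph.dist_le (SimpleGraph.Walk.cons ha SimpleGraph.Walk.nil)
    omega
  · rintro ⟨w, hw1, hw2⟩
    have : heawood.dist u v ≤ 2 :=
      SimpleGraph.dist_le (SimpleGraph.Walk.cons hw1 (SimpleGraph.Walk.cons hw2 SimpleGraph.Walk.nil))
    omega
  · obtain ⟨p, hp⟩ := hreach.exists_walk_length_eq_dist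
    rw [h] at hp
    refine ⟨p.getVert 1, p.getVert 2, ?_, ?_, ?_⟩
    · have := p.adj_getVert_succ (i := 0) (by omega)
      simpa using this
    · exact p.adj_getVert_succ (i := 1) (by omega)
    · have := p.adj_getVert_succ (i := 2) (by omega)
      rw [show (2 : ℕ) + 1 = p.length from by omega] at this
      rwa [p.getVert_length] at this

/-- Any distance-3 added-edge graph is isomorphic to the base one with edge `s(0,3)`. -/
private lemma to_base (u v : ZMod 14) (h : D3 u v) :
    Nonempty ((heawood ⊔ fromEdgeSet {s((0 : ZMod 14), (3 : ZMod 14))}) ≃g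
      (heawood ⊔ fromEdgeSet {s(u, v)})) := by
  obtain ⟨k, c, hcase⟩ := main_orbit u v h
  rcases hcase with ⟨hc, hpair⟩ | ⟨hc, hpair⟩
  · let e : heawood ≃g heawood := (sigIso k).trans (trIso c hc)
    have h0 : e 0 = sigFun k 0 + c := rfl
    have h3 : e 3 = sigFun k 3 + c := rfl
    have base := isoAdd e 0 3
    rw [h0, h3] at base
    rcases hpair with ⟨hx, hy⟩ | ⟨hx, hy⟩
    · rw [hx, hy] at base; exact ⟨base⟩
    · rw [hx, hy] at base
      rw [show s(v, u) = s(u, v) from Sym2.eq_swap] at base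
      exact ⟨base⟩
  · let e : heawood ≃g heawood := (sigIso k).trans (reflIso c hc)
    have h0 : e 0 = c - sigFun k 0 := rfl
    have h3 : e 3 = c - sigFun k 3 := rfl
    have base := isoAdd e 0 3
    rw [h0, h3] at base
    rcases hpair with ⟨hx, hy⟩ | ⟨hx, hy⟩
    · rw [hx, hy] at base; exact ⟨base⟩
    · rw [hx, hy] at base
      rw [show s(v, u) = s(u, v) from Sym2.eq_swap] at base
      exact ⟨base⟩

/-- The graph obtained from the Heawood graph by adding an edge between two vertices at
distance 3 is, up to isomorphism, independent of the chosen pair of vertices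
(it is Cousin 89 of the `E₉+e` family). -/
theorem heawood_add_edge_unique (u v u' v' : ZMod 14)
    (h : heawood.dist u v = 3) (h' : heawood.dist u' v' = 3) :
    Nonempty ((heawood ⊔ fromEdgeSet {s(u, v)}) ≃g (heawood ⊔ fromEdgeSet {s(u', v')})) := by
  obtain ⟨i1⟩ := to_base u v (dist3_D3 h)
  obtain ⟨i2⟩ := to_base u' v' (dist3_D3 h')
  exact ⟨i1.symm.trans i2⟩
end

section
/- Let G and G' be simple bipartite graphs, each with parts of size 7 whose degree multisets are both {4,3,3,3,3,3,3} on each part, such that in each graph the two degree-4 vertices (one in each part) are adjacent, and every 4-cycle of the graph contains the edge joining its two degree-4 vertices. Then G is isomorphic to G'. (That is, up to isomorphism there is a unique such graph, namely Cousin 89 of the E9+e family, obtained from the Heawood graph by adding an edge between two vertices at distance 3.) -/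
open SimpleGraph
open Finset


lemma fourCycle {V : Type*} (G : SimpleGraph V) {x x' y y' : V}
    (hxx : x ≠ x') (hyy : y ≠ y')
    (hxy : x ≠ y) (hxy' : x ≠ y') (hx'y : x' ≠ y) (hx'y' : x' ≠ y')
    (h1 : G.Adj x y) (h2 : G.Adj y x') (h3 : G.Adj x' y') (h4 : G.Adj y' x) :
    ∃ c : G.Walk x x, c.IsCycle ∧ c.length = 4 ∧
      c.edges = [s(x,y), s(y,x'), s(x',y'), s(y',x)] := by
  refine ⟨Walk.cons h1 (Walk.cons h2 (Walk.cons h3 (Walk.cons h4 Walk.nil))), ?_, rfl, rfl⟩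
  simp [Walk.isCycle_def, Walk.isTrail_def, List.Nodup, Sym2.eq_iff,
    hxx, hyy, hxy, hxy', hx'y, hx'y', hxx.symm, hyy.symm, hxy.symm, hxy'.symm, hx'y.symm, hx'y'.symm]

lemma deg_eq_three (f : Fin 7 → ℕ)
    (h : Multiset.map f Finset.univ.val = {4,3,3,3,3,3,3})
    (b : Fin 7) (hb : f b = 4) : ∀ i, i ≠ b → f i = 3 := by
  intro i hi
  have hmem : f i ∈ Multiset.map f Finset.univ.val :=
    Multiset.mem_map_of_mem f (mem_univ i)
  rw [h] at hmem
  have : f i = 4 ∨ f i = 3 := by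
    simp only [Multiset.insert_eq_cons, Multiset.mem_cons, Multiset.mem_singleton] at hmem
    tauto
  rcases this with h4 | h3
  · exfalso
    have hcount : Multiset.count 4 (Multiset.map f Finset.univ.val)
        = (Finset.univ.filter (fun a => 4 = f a)).card := by
      rw [Multiset.count_map]; rfl
    have hsub : ({i, b} : Finset (Fin 7)) ⊆ Finset.univ.filter (fun a => 4 = f a) := by
      intro x hx
      simp only [mem_insert, mem_singleton] at hx
      rcases hx with rfl | rfl <;> simp [h4, hb]
    have h2 : 2 ≤ (Finset.univ.filter (fun a => 4 = f a)).card := by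
      calc 2 = ({i, b} : Finset (Fin 7)).card := (Finset.card_pair hi).symm
        _ ≤ _ := Finset.card_le_card hsub
    rw [← hcount, h] at h2
    simp at h2
  · exact h3

variable (G : SimpleGraph (Fin 7 ⊕ Fin 7)) [DecidableRel G.Adj]

def NB (x : Fin 7) : Finset (Fin 7) := univ.filter (fun j => G.Adj (.inl x) (.inr j))
def NA (y : Fin 7) : Finset (Fin 7) := univ.filter (fun i => G.Adj (.inl i) (.inr y))

lemma mem_NB {x j : Fin 7} : j ∈ NB G x ↔ G.Adj (.inl x) (.inr j) := by simp [NB]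
lemma mem_NA {y i : Fin 7} : i ∈ NA G y ↔ G.Adj (.inl i) (.inr y) := by simp [NA]

lemma NB_card (hbip : ∀ x y, G.Adj x y → (x.isLeft ∧ y.isRight) ∨ (x.isRight ∧ y.isLeft))
    (x : Fin 7) : (NB G x).card = G.degree (Sum.inl x) := by
  rw [← card_neighborFinset_eq_degree]
  have : G.neighborFinset (Sum.inl x) = (NB G x).image Sum.inr := by
    ext v
    cases v with
    | inl w =>
      simp only [mem_neighborFinset, mem_image]
      constructor
      · intro h; rcases hbip _ _ h with ⟨_, h2⟩ | ⟨h1, _⟩ <;> simp_all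
      · rintro ⟨_, _, h⟩; exact absurd h (by simp)
    | inr w => simp [mem_neighborFinset, mem_NB]
  rw [this, card_image_of_injective _ Sum.inr_injective]

lemma NA_card (hbip : ∀ x y, G.Adj x y → (x.isLeft ∧ y.isRight) ∨ (x.isRight ∧ y.isLeft))
    (y : Fin 7) : (NA G y).card = G.degree (Sum.inr y) := by
  rw [← card_neighborFinset_eq_degree]
  have : G.neighborFinset (Sum.inr y) = (NA G y).image Sum.inl := by
    ext v
    cases v with
    | inr w =>
      simp only [mem_neighborFinset, mem_image]
      constructor
      · intro h; rcases hbip _ _ h with ⟨h1, _⟩ | ⟨_, h2⟩ <;> simp_all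
      · rintro ⟨_, _, h⟩; exact absurd h (by simp)
    | inl w => simp [mem_neighborFinset, mem_NA, G.adj_comm]
  rw [this, card_image_of_injective _ Sum.inl_injective]

variable {b b' : Fin 7}
  (h4 : ∀ (v : Fin 7 ⊕ Fin 7) (c : G.Walk v v), c.IsCycle → c.length = 4 →
      s(Sum.inl b, Sum.inr b') ∈ c.edges)

include h4 in
lemma F1A {x x' : Fin 7} (hx : x ≠ b) (hx' : x' ≠ b) (hxx : x ≠ x') :
    (NB G x ∩ NB G x').card ≤ 1 := by
  by_contra hcon
  push_neg at hcon
  obtain ⟨y, hy, y', hy', hyy⟩ := Finset.one_lt_card.mp hcon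
  simp only [mem_inter, mem_NB] at hy hy'
  obtain ⟨cyc, hc, hl, he⟩ := fourCycle G (x := Sum.inl x) (x' := Sum.inl x')
    (y := Sum.inr y) (y' := Sum.inr y')
    (by simpa using hxx) (by simpa using hyy) (by simp) (by simp) (by simp) (by simp)
    hy.1 hy.2.symm hy'.2 hy'.1.symm
  have hmem := h4 _ cyc hc hl
  rw [he] at hmem
  simp only [List.mem_cons, List.not_mem_nil, or_false, Sym2.eq_iff] at hmem
  rcases hmem with h | h | h | h <;> simp_all

include h4 in
lemma F1B {y y' : Fin 7} (hy : y ≠ b') (hy' : y' ≠ b') (hyy : y ≠ y') :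
    (NA G y ∩ NA G y').card ≤ 1 := by
  by_contra hcon
  push_neg at hcon
  obtain ⟨x, hx, x', hx', hxx⟩ := Finset.one_lt_card.mp hcon
  simp only [mem_inter, mem_NA] at hx hx'
  obtain ⟨cyc, hc, hl, he⟩ := fourCycle G (x := Sum.inl x) (x' := Sum.inl x')
    (y := Sum.inr y) (y' := Sum.inr y')
    (by simpa using hxx) (by simpa using hyy) (by simp) (by simp) (by simp) (by simp)
    hx.1 hx'.1.symm hx'.2 hx.2.symm
  have hmem := h4 _ cyc hc hl
  rw [he] at hmem
  simp only [List.mem_cons, List.not_mem_nil, or_false, Sym2.eq_iff] at hmem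
  rcases hmem with h | h | h | h <;> simp_all

include h4 in
lemma F2A {x : Fin 7} (hx : x ≠ b) :
    (NB G x ∩ (NB G b).erase b').card ≤ 1 := by
  by_contra hcon
  push_neg at hcon
  obtain ⟨y, hy, y', hy', hyy⟩ := Finset.one_lt_card.mp hcon
  simp only [mem_inter, mem_erase, mem_NB] at hy hy'
  obtain ⟨cyc, hc, hl, he⟩ := fourCycle G (x := Sum.inl x) (x' := Sum.inl b)
    (y := Sum.inr y) (y' := Sum.inr y')
    (by simpa using hx) (by simpa using hyy) (by simp) (by simp) (by simp) (by simp)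
    hy.1 hy.2.2.symm hy'.2.2 hy'.1.symm
  have hmem := h4 _ cyc hc hl
  rw [he] at hmem
  simp only [List.mem_cons, List.not_mem_nil, or_false, Sym2.eq_iff, Sum.inl.injEq,
    Sum.inr.injEq, reduceCtorEq, false_and, and_false, false_or, or_false, true_and,
    and_true] at hmem
  obtain h | h | h | h := hmem
  · exact hx h.1.symm
  · exact hy.2.1 h.symm
  · exact hy'.2.1 h.symm
  · exact hx h.1.symm

include h4 in
lemma F2B {y : Fin 7} (hy : y ≠ b') :
    (NA G y ∩ (NA G b').erase b).card ≤ 1 := by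
  by_contra hcon
  push_neg at hcon
  obtain ⟨x, hx, x', hx', hxx⟩ := Finset.one_lt_card.mp hcon
  simp only [mem_inter, mem_erase, mem_NA] at hx hx'
  obtain ⟨cyc, hc, hl, he⟩ := fourCycle G (x := Sum.inl x) (x' := Sum.inl x')
    (y := Sum.inr y) (y' := Sum.inr b')
    (by simpa using hxx) (by simpa using hy) (by simp) (by simp) (by simp) (by simp)
    hx.1 hx'.1.symm hx'.2.2 hx.2.2.symm
  have hmem := h4 _ cyc hc hl
  rw [he] at hmem
  simp only [List.mem_cons, List.not_mem_nil, or_false, Sym2.eq_iff, Sum.inl.injEq,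
    Sum.inr.injEq, reduceCtorEq, false_and, and_false, false_or, or_false, true_and,
    and_true] at hmem
  obtain h | h | h | h := hmem
  · exact hy h.2.symm
  · exact hy h.2.symm
  · exact hx'.2.1 h.symm
  · exact hx.2.1 h.symm

def Mmat : Fin 7 → Fin 7 → Bool :=
  ![![true,  true,  true,  true,  false, false, false],
    ![true,  true,  false, false, true,  false, false],
    ![true,  false, true,  false, false, true,  false],
    ![true,  false, false, true,  false, false, true ],
    ![false, true,  false, false, false, true,  true ],
    ![false, false, true,  false, true,  false, true ],
    ![false, false, false, true,  true,  true,  false]]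

def Cgraph : SimpleGraph (Fin 7 ⊕ Fin 7) where
  Adj v w := match v, w with
    | .inl i, .inr j => Mmat i j = true
    | .inr j, .inl i => Mmat i j = true
    | _, _ => False
  symm := ⟨by rintro (i|i) (j|j) h <;> simp_all⟩
  loopless := ⟨by rintro (i|i) h <;> simp_all⟩

lemma keyAux (G : SimpleGraph (Fin 7 ⊕ Fin 7)) [DecidableRel G.Adj]
    (hbip : ∀ x y, G.Adj x y → (x.isLeft ∧ y.isRight) ∨ (x.isRight ∧ y.isLeft))
    (b b' : Fin 7)
    (cNB : ∀ x, x ≠ b → (NB G x).card = 3)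
    (cNA : ∀ y, y ≠ b' → (NA G y).card = 3)
    (cNBb : (NB G b).card = 4)
    (cNAb : (NA G b').card = 4)
    (hadj : G.Adj (Sum.inl b) (Sum.inr b'))
    (F1A : ∀ {x x' : Fin 7}, x ≠ b → x' ≠ b → x ≠ x' → (NB G x ∩ NB G x').card ≤ 1)
    (F1B : ∀ {y y' : Fin 7}, y ≠ b' → y' ≠ b' → y ≠ y' → (NA G y ∩ NA G y').card ≤ 1)
    (F2A : ∀ {x : Fin 7}, x ≠ b → (NB G x ∩ (NB G b).erase b').card ≤ 1)
    (F2B : ∀ {y : Fin 7}, y ≠ b' → (NA G y ∩ (NA G b').erase b).card ≤ 1) :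
    Nonempty (Cgraph ≃g G) := by
  classical
  set T : Finset (Fin 7) := (NB G b).erase b' with hT
  set A1 : Finset (Fin 7) := (NA G b').erase b with hA1
  set B2 : Finset (Fin 7) := univ \ NB G b with hB2
  set A2 : Finset (Fin 7) := univ \ NA G b' with hA2
  have hb'NB : b' ∈ NB G b := (mem_NB G).2 hadj
  have hbNA : b ∈ NA G b' := (mem_NA G).2 hadj
  have cT : T.card = 3 := by rw [hT, card_erase_of_mem hb'NB, cNBb]
  have cA1 : A1.card = 3 := by rw [hA1, card_erase_of_mem hbNA, cNAb]
  have cB2 : B2.card = 3 := by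
    rw [hB2, card_sdiff_of_subset (subset_univ _), cNBb]; rfl
  have cA2 : A2.card = 3 := by
    rw [hA2, card_sdiff_of_subset (subset_univ _), cNAb]; rfl
  -- the three other neighbours of b'
  obtain ⟨α0, α1, α2, hα01, hα02, hα12, hA1eq⟩ := Finset.card_eq_three.1 cA1
  have hαmem : ∀ z ∈ ({α0, α1, α2} : Finset (Fin 7)), z ≠ b ∧ b' ∈ NB G z := by
    intro z hz
    rw [← hA1eq] at hz
    have h1 : z ≠ b := (Finset.mem_erase.1 hz).1
    have h2 : z ∈ NA G b' := Finset.mem_of_mem_erase hz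
    exact ⟨h1, (mem_NB G).2 ((mem_NA G).1 h2)⟩
  have hα0 := hαmem α0 (by simp); have hα1 := hαmem α1 (by simp)
  have hα2 := hαmem α2 (by simp)
  -- the P sets
  set P0 : Finset (Fin 7) := (NB G α0).erase b' with hP0
  set P1 : Finset (Fin 7) := (NB G α1).erase b' with hP1
  set P2 : Finset (Fin 7) := (NB G α2).erase b' with hP2
  have cP0 : P0.card = 2 := by rw [hP0, card_erase_of_mem hα0.2, cNB _ hα0.1]
  have cP1 : P1.card = 2 := by rw [hP1, card_erase_of_mem hα1.2, cNB _ hα1.1]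
  have cP2 : P2.card = 2 := by rw [hP2, card_erase_of_mem hα2.2, cNB _ hα2.1]
  -- pairwise disjointness of the P sets
  have hdisj : ∀ {u v : Fin 7}, u ≠ b → v ≠ b → u ≠ v → b' ∈ NB G u → b' ∈ NB G v →
      Disjoint ((NB G u).erase b') ((NB G v).erase b') := by
    intro u v hu hv huv hbu hbv
    rw [Finset.disjoint_left]
    intro y hy1 hy2
    have h1 : (NB G u ∩ NB G v).card ≤ 1 := F1A hu hv huv
    have hsub : ({b', y} : Finset (Fin 7)) ⊆ NB G u ∩ NB G v := by
      intro z hz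
      simp only [mem_insert, mem_singleton] at hz
      rcases hz with rfl | rfl
      · exact mem_inter.2 ⟨hbu, hbv⟩
      · exact mem_inter.2 ⟨mem_of_mem_erase hy1, mem_of_mem_erase hy2⟩
    have hyb : y ≠ b' := (Finset.mem_erase.1 hy1).1
    have : 2 ≤ (NB G u ∩ NB G v).card := by
      calc 2 = ({b', y} : Finset (Fin 7)).card := (Finset.card_pair hyb.symm).symm
        _ ≤ _ := Finset.card_le_card hsub
    omega
  have hd01 : Disjoint P0 P1 := hdisj hα0.1 hα1.1 hα01 hα0.2 hα1.2
  have hd02 : Disjoint P0 P2 := hdisj hα0.1 hα2.1 hα02 hα0.2 hα2.2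
  have hd12 : Disjoint P1 P2 := hdisj hα1.1 hα2.1 hα12 hα1.2 hα2.2
  -- the union of the P sets is everything except b'
  have hPsub : P0 ∪ P1 ∪ P2 ⊆ univ.erase b' := by
    intro y hy
    simp only [mem_union] at hy
    rcases hy with (hy | hy) | hy <;>
      exact Finset.mem_erase.2 ⟨(Finset.mem_erase.1 hy).1, mem_univ _⟩
  have cPU : (P0 ∪ P1 ∪ P2).card = 6 := by
    rw [card_union_of_disjoint (by
      rw [Finset.disjoint_left]; intro y hy hy2
      simp only [mem_union] at hy
      rcases hy with hy | hy
      · exact (Finset.disjoint_left.1 hd02) hy hy2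
      · exact (Finset.disjoint_left.1 hd12) hy hy2),
      card_union_of_disjoint hd01, cP0, cP1, cP2]
  have hPU : P0 ∪ P1 ∪ P2 = univ.erase b' := by
    apply Finset.eq_of_subset_of_card_le hPsub
    rw [card_erase_of_mem (mem_univ _), cPU]
    rfl
  -- T is covered by the P sets
  have hTsub : T ⊆ P0 ∪ P1 ∪ P2 := by
    rw [hPU]
    intro y hy
    exact Finset.mem_erase.2 ⟨(Finset.mem_erase.1 hy).1, mem_univ _⟩
  have hTP0 : (P0 ∩ T).card ≤ 1 :=
    le_trans (Finset.card_le_card (inter_subset_inter (erase_subset _ _) le_rfl)) (F2A hα0.1)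
  have hTP1 : (P1 ∩ T).card ≤ 1 :=
    le_trans (Finset.card_le_card (inter_subset_inter (erase_subset _ _) le_rfl)) (F2A hα1.1)
  have hTP2 : (P2 ∩ T).card ≤ 1 :=
    le_trans (Finset.card_le_card (inter_subset_inter (erase_subset _ _) le_rfl)) (F2A hα2.1)
  have hTsum : 3 ≤ (P0 ∩ T).card + (P1 ∩ T).card + (P2 ∩ T).card := by
    have h1 : T ⊆ (P0 ∩ T) ∪ (P1 ∩ T) ∪ (P2 ∩ T) := by
      intro y hy
      have := hTsub hy
      simp only [mem_union, mem_inter] at this ⊢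
      tauto
    calc 3 = T.card := cT.symm
      _ ≤ ((P0 ∩ T) ∪ (P1 ∩ T) ∪ (P2 ∩ T)).card := Finset.card_le_card h1
      _ ≤ ((P0 ∩ T) ∪ (P1 ∩ T)).card + (P2 ∩ T).card := Finset.card_union_le _ _
      _ ≤ (P0 ∩ T).card + (P1 ∩ T).card + (P2 ∩ T).card :=
          Nat.add_le_add_right (Finset.card_union_le _ _) _
  obtain ⟨t0, ht0⟩ : ∃ t, P0 ∩ T = {t} := Finset.card_eq_one.1 (by omega)
  obtain ⟨t1, ht1⟩ : ∃ t, P1 ∩ T = {t} := Finset.card_eq_one.1 (by omega)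
  obtain ⟨t2, ht2⟩ : ∃ t, P2 ∩ T = {t} := Finset.card_eq_one.1 (by omega)
  -- the s elements
  have hsplit : ∀ (P : Finset (Fin 7)), P ⊆ univ.erase b' → P = (P ∩ T) ∪ (P ∩ B2) := by
    intro P hPs
    ext y
    simp only [mem_union, mem_inter, hT, hB2, Finset.mem_erase, mem_sdiff, mem_univ, true_and]
    constructor
    · intro hy
      by_cases hyb : y ∈ NB G b
      · exact Or.inl ⟨hy, (Finset.mem_erase.1 (hPs hy)).1, hyb⟩
      · exact Or.inr ⟨hy, hyb⟩
    · tauto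
  have hdTB : ∀ (P : Finset (Fin 7)), Disjoint (P ∩ T) (P ∩ B2) := by
    intro P
    rw [Finset.disjoint_left]
    intro y hy1 hy2
    simp only [mem_inter, hT, hB2, Finset.mem_erase, mem_sdiff] at hy1 hy2
    exact hy2.2.2 hy1.2.2
  have hPe : ∀ i : Fin 3, (![P0, P1, P2] i) ⊆ univ.erase b' := by
    intro i
    fin_cases i <;> intro y hy <;>
      exact Finset.mem_erase.2 ⟨(Finset.mem_erase.1 hy).1, mem_univ _⟩
  obtain ⟨s0, hs0⟩ : ∃ s, P0 ∩ B2 = {s} := by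
    apply Finset.card_eq_one.1
    have := congrArg Finset.card (hsplit P0 (hPe 0))
    rw [card_union_of_disjoint (hdTB P0), cP0, ht0] at this
    simp at this; omega
  obtain ⟨s1, hs1⟩ : ∃ s, P1 ∩ B2 = {s} := by
    apply Finset.card_eq_one.1
    have := congrArg Finset.card (hsplit P1 (hPe 1))
    rw [card_union_of_disjoint (hdTB P1), cP1, ht1] at this
    simp at this; omega
  obtain ⟨s2, hs2⟩ : ∃ s, P2 ∩ B2 = {s} := by
    apply Finset.card_eq_one.1
    have := congrArg Finset.card (hsplit P2 (hPe 2))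
    rw [card_union_of_disjoint (hdTB P2), cP2, ht2] at this
    simp at this; omega
  -- basic membership facts
  have ht0P : t0 ∈ P0 ∧ t0 ∈ T := by
    have : t0 ∈ P0 ∩ T := by rw [ht0]; exact mem_singleton_self _
    exact ⟨(mem_inter.1 this).1, (mem_inter.1 this).2⟩
  have ht1P : t1 ∈ P1 ∧ t1 ∈ T := by
    have : t1 ∈ P1 ∩ T := by rw [ht1]; exact mem_singleton_self _
    exact ⟨(mem_inter.1 this).1, (mem_inter.1 this).2⟩
  have ht2P : t2 ∈ P2 ∧ t2 ∈ T := by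
    have : t2 ∈ P2 ∩ T := by rw [ht2]; exact mem_singleton_self _
    exact ⟨(mem_inter.1 this).1, (mem_inter.1 this).2⟩
  have hs0P : s0 ∈ P0 ∧ s0 ∈ B2 := by
    have : s0 ∈ P0 ∩ B2 := by rw [hs0]; exact mem_singleton_self _
    exact ⟨(mem_inter.1 this).1, (mem_inter.1 this).2⟩
  have hs1P : s1 ∈ P1 ∧ s1 ∈ B2 := by
    have : s1 ∈ P1 ∩ B2 := by rw [hs1]; exact mem_singleton_self _
    exact ⟨(mem_inter.1 this).1, (mem_inter.1 this).2⟩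
  have hs2P : s2 ∈ P2 ∧ s2 ∈ B2 := by
    have : s2 ∈ P2 ∩ B2 := by rw [hs2]; exact mem_singleton_self _
    exact ⟨(mem_inter.1 this).1, (mem_inter.1 this).2⟩
  -- distinctness within T and B2 images
  have ht01 : t0 ≠ t1 := fun h => (Finset.disjoint_left.1 hd01) ht0P.1 (h ▸ ht1P.1)
  have ht02 : t0 ≠ t2 := fun h => (Finset.disjoint_left.1 hd02) ht0P.1 (h ▸ ht2P.1)
  have ht12 : t1 ≠ t2 := fun h => (Finset.disjoint_left.1 hd12) ht1P.1 (h ▸ ht2P.1)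
  have hs01 : s0 ≠ s1 := fun h => (Finset.disjoint_left.1 hd01) hs0P.1 (h ▸ hs1P.1)
  have hs02 : s0 ≠ s2 := fun h => (Finset.disjoint_left.1 hd02) hs0P.1 (h ▸ hs2P.1)
  have hs12 : s1 ≠ s2 := fun h => (Finset.disjoint_left.1 hd12) hs1P.1 (h ▸ hs2P.1)
  -- T and B2 are exactly these triples
  have hTts : T = {t0, t1, t2} := by
    symm
    apply Finset.eq_of_subset_of_card_le
    · intro y hy
      simp only [mem_insert, mem_singleton] at hy
      rcases hy with rfl | rfl | rfl
      exacts [ht0P.2, ht1P.2, ht2P.2]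
    · rw [cT]
      rw [Finset.card_insert_of_notMem (by simp [ht01, ht02]),
        Finset.card_insert_of_notMem (by simp [ht12]), Finset.card_singleton]
  have hB2ss : B2 = {s0, s1, s2} := by
    symm
    apply Finset.eq_of_subset_of_card_le
    · intro y hy
      simp only [mem_insert, mem_singleton] at hy
      rcases hy with rfl | rfl | rfl
      exacts [hs0P.2, hs1P.2, hs2P.2]
    · rw [cB2]
      rw [Finset.card_insert_of_notMem (by simp [hs01, hs02]),
        Finset.card_insert_of_notMem (by simp [hs12]), Finset.card_singleton]
  -- disjointness facts between b', T, B2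
  have hb'T : b' ∉ T := Finset.notMem_erase _ _
  have hb'B2 : b' ∉ B2 := by simp only [hB2, mem_sdiff]; tauto
  have hTB2 : ∀ y ∈ T, y ∉ B2 := by
    intro y hy
    simp only [hT, hB2, Finset.mem_erase, mem_sdiff] at hy ⊢
    tauto
  -- row descriptions for the α's
  have hrowα : ∀ (α t s : Fin 7) (P : Finset (Fin 7)), α ≠ b → b' ∈ NB G α →
      P = (NB G α).erase b' → t ∈ P → s ∈ P → t ∈ T → s ∈ B2 →
      NB G α = {b', t, s} := by
    intro α t s P hαb hb'α hPd htP hsP htT hsB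
    symm
    apply Finset.eq_of_subset_of_card_le
    · intro y hy
      simp only [mem_insert, mem_singleton] at hy
      rcases hy with rfl | rfl | rfl
      exacts [hb'α, mem_of_mem_erase (hPd ▸ htP), mem_of_mem_erase (hPd ▸ hsP)]
    · rw [cNB _ hαb]
      have htb' : t ≠ b' := (Finset.mem_erase.1 (hPd ▸ htP)).1
      have hsb' : s ≠ b' := (Finset.mem_erase.1 (hPd ▸ hsP)).1
      have hts : t ≠ s := fun h => hTB2 t htT (h ▸ hsB)
      rw [Finset.card_insert_of_notMem (by simp [htb'.symm, hsb'.symm]),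
        Finset.card_insert_of_notMem (by simp [hts]), Finset.card_singleton]
  have hrow1 : NB G α0 = {b', t0, s0} :=
    hrowα α0 t0 s0 P0 hα0.1 hα0.2 hP0 ht0P.1 hs0P.1 ht0P.2 hs0P.2
  have hrow2 : NB G α1 = {b', t1, s1} :=
    hrowα α1 t1 s1 P1 hα1.1 hα1.2 hP1 ht1P.1 hs1P.1 ht1P.2 hs1P.2
  have hrow3 : NB G α2 = {b', t2, s2} :=
    hrowα α2 t2 s2 P2 hα2.1 hα2.2 hP2 ht2P.1 hs2P.1 ht2P.2 hs2P.2
  -- row description for b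
  have hrow0 : NB G b = {b', t0, t1, t2} := by
    rw [← hTts]
    rw [hT, Finset.insert_erase hb'NB]
  -- B side: find the u's
  have hBside : ∀ (α t : Fin 7), α ≠ b → α ∈ NA G b' → t ≠ b' → b ∈ NA G t →
      α ∈ NA G t → ∃ u, u ∈ NA G t ∧ u ≠ b ∧ u ≠ α ∧ u ∉ NA G b' := by
    intro α t hαb hαb' htb' hbt hαt
    have hc : (((NA G t).erase b).erase α).card = 1 := by
      rw [card_erase_of_mem (Finset.mem_erase.2 ⟨hαb, hαt⟩), card_erase_of_mem hbt,
        cNA _ htb']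
    obtain ⟨u, hu⟩ := Finset.card_eq_one.1 hc
    have humem : u ∈ ((NA G t).erase b).erase α := hu ▸ mem_singleton_self _
    have hub : u ≠ b := (Finset.mem_erase.1 (mem_of_mem_erase humem)).1
    have huα : u ≠ α := (Finset.mem_erase.1 humem).1
    have hut : u ∈ NA G t := mem_of_mem_erase (mem_of_mem_erase humem)
    refine ⟨u, hut, hub, huα, fun hub' => ?_⟩
    have h1 : (NA G t ∩ A1).card ≤ 1 := F2B htb'
    have hsub : ({α, u} : Finset (Fin 7)) ⊆ NA G t ∩ A1 := by
      intro z hz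
      simp only [mem_insert, mem_singleton] at hz
      rcases hz with rfl | rfl
      · exact mem_inter.2 ⟨hαt, Finset.mem_erase.2 ⟨hαb, hαb'⟩⟩
      · exact mem_inter.2 ⟨hut, Finset.mem_erase.2 ⟨hub, hub'⟩⟩
    have : 2 ≤ (NA G t ∩ A1).card := by
      calc 2 = ({α, u} : Finset (Fin 7)).card := (Finset.card_pair (Ne.symm huα)).symm
        _ ≤ _ := Finset.card_le_card hsub
    omega
  have hα0A1 : α0 ∈ A1 := hA1eq ▸ (by simp : α0 ∈ ({α0,α1,α2}:Finset (Fin 7)))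
  have hα1A1 : α1 ∈ A1 := hA1eq ▸ (by simp : α1 ∈ ({α0,α1,α2}:Finset (Fin 7)))
  have hα2A1 : α2 ∈ A1 := hA1eq ▸ (by simp : α2 ∈ ({α0,α1,α2}:Finset (Fin 7)))
  have htb'0 : t0 ≠ b' := (Finset.mem_erase.1 ht0P.2).1
  have htb'1 : t1 ≠ b' := (Finset.mem_erase.1 ht1P.2).1
  have htb'2 : t2 ≠ b' := (Finset.mem_erase.1 ht2P.2).1
  have hbt0 : b ∈ NA G t0 := (mem_NA G).2 ((mem_NB G).1 (mem_of_mem_erase ht0P.2))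
  have hbt1 : b ∈ NA G t1 := (mem_NA G).2 ((mem_NB G).1 (mem_of_mem_erase ht1P.2))
  have hbt2 : b ∈ NA G t2 := (mem_NA G).2 ((mem_NB G).1 (mem_of_mem_erase ht2P.2))
  have hαt0 : α0 ∈ NA G t0 := (mem_NA G).2 ((mem_NB G).1 (by rw [hrow1]; simp))
  have hαt1 : α1 ∈ NA G t1 := (mem_NA G).2 ((mem_NB G).1 (by rw [hrow2]; simp))
  have hαt2 : α2 ∈ NA G t2 := (mem_NA G).2 ((mem_NB G).1 (by rw [hrow3]; simp))
  obtain ⟨u0, hu0t, hu0b, hu0α, hu0b'⟩ :=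
    hBside α0 t0 hα0.1 (mem_of_mem_erase hα0A1) htb'0 hbt0 hαt0
  obtain ⟨u1, hu1t, hu1b, hu1α, hu1b'⟩ :=
    hBside α1 t1 hα1.1 (mem_of_mem_erase hα1A1) htb'1 hbt1 hαt1
  obtain ⟨u2, hu2t, hu2b, hu2α, hu2b'⟩ :=
    hBside α2 t2 hα2.1 (mem_of_mem_erase hα2A1) htb'2 hbt2 hαt2
  -- distinctness of the u's
  have huij : ∀ {u ti tj : Fin 7}, ti ≠ b' → tj ≠ b' → ti ≠ tj → u ≠ b →
      u ∈ NA G ti → u ∈ NA G tj → b ∈ NA G ti → b ∈ NA G tj → False := by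
    intro u ti tj h1 h2 h3 h4 h5 h6 h7 h8
    have hF := F1B h1 h2 h3
    have hsub : ({b, u} : Finset (Fin 7)) ⊆ NA G ti ∩ NA G tj := by
      intro z hz
      simp only [mem_insert, mem_singleton] at hz
      rcases hz with rfl | rfl
      · exact mem_inter.2 ⟨h7, h8⟩
      · exact mem_inter.2 ⟨h5, h6⟩
    have : 2 ≤ (NA G ti ∩ NA G tj).card := by
      calc 2 = ({b, u} : Finset (Fin 7)).card := (Finset.card_pair (Ne.symm h4)).symm
        _ ≤ _ := Finset.card_le_card hsub
    omega
  have hu01 : u0 ≠ u1 := fun h => huij htb'0 htb'1 ht01 hu0b hu0t (h ▸ hu1t) hbt0 hbt1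
  have hu02 : u0 ≠ u2 := fun h => huij htb'0 htb'2 ht02 hu0b hu0t (h ▸ hu2t) hbt0 hbt2
  have hu12 : u1 ≠ u2 := fun h => huij htb'1 htb'2 ht12 hu1b hu1t (h ▸ hu2t) hbt1 hbt2
  -- u's are distinct from α's
  have huα' : ∀ {u α : Fin 7}, u ∉ NA G b' → α ∈ NA G b' → u ≠ α := by
    intro u α h1 h2 h; exact h1 (h ▸ h2)
  have hu0α1 : u0 ≠ α1 := huα' hu0b' (mem_of_mem_erase hα1A1)
  have hu0α2 : u0 ≠ α2 := huα' hu0b' (mem_of_mem_erase hα2A1)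
  have hu1α0 : u1 ≠ α0 := huα' hu1b' (mem_of_mem_erase hα0A1)
  have hu1α2 : u1 ≠ α2 := huα' hu1b' (mem_of_mem_erase hα2A1)
  have hu2α0 : u2 ≠ α0 := huα' hu2b' (mem_of_mem_erase hα0A1)
  have hu2α1 : u2 ≠ α1 := huα' hu2b' (mem_of_mem_erase hα1A1)
  -- rows for the u's
  have hrowu : ∀ (u α t s : Fin 7), u ≠ b → α ≠ b → u ≠ α → u ∉ NA G b' →
      NB G α = {b', t, s} → t ∈ T → s ∈ B2 → u ∈ NA G t →
      NB G u = insert t (B2.erase s) := by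
    intro u α t s hub hαb huα hub' hrow htT hsB hut
    have hb'u : b' ∉ NB G u := fun h => hub' ((mem_NA G).2 ((mem_NB G).1 h))
    have htu : t ∈ NB G u := (mem_NB G).2 ((mem_NA G).1 hut)
    refine Finset.eq_of_subset_of_card_le ?_ ?_
    swap
    · rw [cNB _ hub]
      have htB2 : t ∉ B2.erase s := fun h => hTB2 t htT (mem_of_mem_erase h)
      rw [Finset.card_insert_of_notMem htB2, card_erase_of_mem hsB, cB2]
    · intro y hy
      have hyb' : y ≠ b' := fun h => hb'u (h ▸ hy)
      by_cases hyT : y ∈ T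
      · -- y must be t
        have : y = t := by
          by_contra hne
          have hF := F2A hub
          have hsub : ({y, t} : Finset (Fin 7)) ⊆ NB G u ∩ T := by
            intro z hz
            simp only [mem_insert, mem_singleton] at hz
            rcases hz with rfl | rfl
            · exact mem_inter.2 ⟨hy, hyT⟩
            · exact mem_inter.2 ⟨htu, htT⟩
          have : 2 ≤ (NB G u ∩ T).card := by
            calc 2 = ({y, t} : Finset (Fin 7)).card := (Finset.card_pair hne).symm
              _ ≤ _ := Finset.card_le_card hsub
          omega
        subst this
        exact mem_insert_self _ _
      · -- y is in B2 and not s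
        have hyB2 : y ∈ B2 := by
          simp only [hB2, mem_sdiff, mem_univ, true_and]
          intro hyNB
          exact hyT (by simp only [hT, Finset.mem_erase]; exact ⟨hyb', hyNB⟩)
        have hys : y ≠ s := by
          intro h
          subst h
          have hF := F1A hub hαb huα
          have hts : t ≠ y := fun h => hTB2 t htT (h ▸ hyB2)
          have hsub : ({t, y} : Finset (Fin 7)) ⊆ NB G u ∩ NB G α := by
            intro z hz
            simp only [mem_insert, mem_singleton] at hz
            rcases hz with rfl | rfl
            · exact mem_inter.2 ⟨htu, by rw [hrow]; simp⟩
            · exact mem_inter.2 ⟨hy, by rw [hrow]; simp⟩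
          have : 2 ≤ (NB G u ∩ NB G α).card := by
            calc 2 = ({t, y} : Finset (Fin 7)).card := (Finset.card_pair hts).symm
              _ ≤ _ := Finset.card_le_card hsub
          omega
        exact mem_insert_of_mem (Finset.mem_erase.2 ⟨hys, hyB2⟩)
  have he0 : ({s0,s1,s2} : Finset (Fin 7)).erase s0 = {s1, s2} := by
    ext y
    simp only [Finset.mem_erase, mem_insert, mem_singleton]
    constructor
    · rintro ⟨h1, rfl | rfl | rfl⟩
      exacts [absurd rfl h1, Or.inl rfl, Or.inr rfl]
    · rintro (rfl | rfl)
      exacts [⟨hs01.symm, Or.inr (Or.inl rfl)⟩, ⟨hs02.symm, Or.inr (Or.inr rfl)⟩]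
  have he1 : ({s0,s1,s2} : Finset (Fin 7)).erase s1 = {s0, s2} := by
    ext y
    simp only [Finset.mem_erase, mem_insert, mem_singleton]
    constructor
    · rintro ⟨h1, rfl | rfl | rfl⟩
      exacts [Or.inl rfl, absurd rfl h1, Or.inr rfl]
    · rintro (rfl | rfl)
      exacts [⟨hs01, Or.inl rfl⟩, ⟨hs12.symm, Or.inr (Or.inr rfl)⟩]
  have he2 : ({s0,s1,s2} : Finset (Fin 7)).erase s2 = {s0, s1} := by
    ext y
    simp only [Finset.mem_erase, mem_insert, mem_singleton]
    constructor
    · rintro ⟨h1, rfl | rfl | rfl⟩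
      exacts [Or.inl rfl, Or.inr rfl, absurd rfl h1]
    · rintro (rfl | rfl)
      exacts [⟨hs02, Or.inl rfl⟩, ⟨hs12, Or.inr (Or.inl rfl)⟩]
  have hrow4 : NB G u0 = {t0, s1, s2} := by
    rw [hrowu u0 α0 t0 s0 hu0b hα0.1 hu0α hu0b' hrow1 ht0P.2 hs0P.2 hu0t, hB2ss, he0]
  have hrow5 : NB G u1 = {t1, s0, s2} := by
    rw [hrowu u1 α1 t1 s1 hu1b hα1.1 hu1α hu1b' hrow2 ht1P.2 hs1P.2 hu1t, hB2ss, he1]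
  have hrow6 : NB G u2 = {t2, s0, s1} := by
    rw [hrowu u2 α2 t2 s2 hu2b hα2.1 hu2α hu2b' hrow3 ht2P.2 hs2P.2 hu2t, hB2ss, he2]
  -- remaining distinctness facts for the g-values
  have hsb'0 : s0 ≠ b' := fun h => hb'B2 (h ▸ hs0P.2)
  have hsb'1 : s1 ≠ b' := fun h => hb'B2 (h ▸ hs1P.2)
  have hsb'2 : s2 ≠ b' := fun h => hb'B2 (h ▸ hs2P.2)
  have hts00 : t0 ≠ s0 := fun h => hTB2 t0 ht0P.2 (h ▸ hs0P.2)
  have hts01 : t0 ≠ s1 := fun h => hTB2 t0 ht0P.2 (h ▸ hs1P.2)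
  have hts02 : t0 ≠ s2 := fun h => hTB2 t0 ht0P.2 (h ▸ hs2P.2)
  have hts10 : t1 ≠ s0 := fun h => hTB2 t1 ht1P.2 (h ▸ hs0P.2)
  have hts11 : t1 ≠ s1 := fun h => hTB2 t1 ht1P.2 (h ▸ hs1P.2)
  have hts12 : t1 ≠ s2 := fun h => hTB2 t1 ht1P.2 (h ▸ hs2P.2)
  have hts20 : t2 ≠ s0 := fun h => hTB2 t2 ht2P.2 (h ▸ hs0P.2)
  have hts21 : t2 ≠ s1 := fun h => hTB2 t2 ht2P.2 (h ▸ hs1P.2)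
  have hts22 : t2 ≠ s2 := fun h => hTB2 t2 ht2P.2 (h ▸ hs2P.2)
  -- the two labelling maps
  set f : Fin 7 → Fin 7 := ![b, α0, α1, α2, u0, u1, u2] with hf
  set g : Fin 7 → Fin 7 := ![b', t0, t1, t2, s0, s1, s2] with hg
  have hfinj : Function.Injective f := by
    rw [← List.nodup_ofFn]
    simp only [hf, List.ofFn_succ, Matrix.cons_val_zero, Matrix.cons_val_one, Matrix.head_cons,
      Matrix.cons_val_succ, List.ofFn_zero, List.nodup_cons, List.mem_cons, List.mem_singleton,
      List.not_mem_nil, or_false, List.nodup_nil, and_true, not_or, List.mem_nil_iff]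
    refine ⟨⟨?_,?_,?_,?_,?_,?_⟩,⟨?_,?_,?_,?_,?_⟩,⟨?_,?_,?_,?_⟩,⟨?_,?_,?_⟩,⟨?_,?_⟩,?_,not_false⟩
    all_goals
      first
        | exact hα0.1.symm | exact hα1.1.symm | exact hα2.1.symm
        | exact hu0b.symm | exact hu1b.symm | exact hu2b.symm
        | exact hα01 | exact hα02 | exact hα12
        | exact hu0α.symm | exact hu1α.symm | exact hu2α.symm
        | exact hu0α1.symm | exact hu0α2.symm | exact hu1α0.symm | exact hu1α2.symm
        | exact hu2α0.symm | exact hu2α1.symm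
        | exact hu01 | exact hu02 | exact hu12
  have hginj : Function.Injective g := by
    rw [← List.nodup_ofFn]
    simp only [hg, List.ofFn_succ, Matrix.cons_val_zero, Matrix.cons_val_one, Matrix.head_cons,
      Matrix.cons_val_succ, List.ofFn_zero, List.nodup_cons, List.mem_cons, List.mem_singleton,
      List.not_mem_nil, or_false, List.nodup_nil, and_true, not_or, List.mem_nil_iff]
    refine ⟨⟨?_,?_,?_,?_,?_,?_⟩,⟨?_,?_,?_,?_,?_⟩,⟨?_,?_,?_,?_⟩,⟨?_,?_,?_⟩,⟨?_,?_⟩,?_,not_false⟩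
    all_goals
      first
        | exact htb'0.symm | exact htb'1.symm | exact htb'2.symm
        | exact hsb'0.symm | exact hsb'1.symm | exact hsb'2.symm
        | exact ht01 | exact ht02 | exact ht12
        | exact hts00 | exact hts01 | exact hts02
        | exact hts10 | exact hts11 | exact hts12
        | exact hts20 | exact hts21 | exact hts22
        | exact hs01 | exact hs02 | exact hs12
  -- the adjacency dictionary
  have adj00 : G.Adj (.inl b) (.inr b') := (mem_NB G).1 (by rw [hrow0]; simp)
  have adj01 : G.Adj (.inl b) (.inr t0) := (mem_NB G).1 (by rw [hrow0]; simp)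
  have adj02 : G.Adj (.inl b) (.inr t1) := (mem_NB G).1 (by rw [hrow0]; simp)
  have adj03 : G.Adj (.inl b) (.inr t2) := (mem_NB G).1 (by rw [hrow0]; simp)
  have adj04 : ¬ G.Adj (.inl b) (.inr s0) := by
    intro hadjx
    have hm := (mem_NB G).2 hadjx
    rw [hrow0] at hm
    simp only [mem_insert, mem_singleton] at hm
    rcases hm with h | h | h | h
    · exact absurd h (hsb'0)
    · exact absurd h (hts00.symm)
    · exact absurd h (hts10.symm)
    · exact absurd h (hts20.symm)
  have adj05 : ¬ G.Adj (.inl b) (.inr s1) := by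
    intro hadjx
    have hm := (mem_NB G).2 hadjx
    rw [hrow0] at hm
    simp only [mem_insert, mem_singleton] at hm
    rcases hm with h | h | h | h
    · exact absurd h (hsb'1)
    · exact absurd h (hts01.symm)
    · exact absurd h (hts11.symm)
    · exact absurd h (hts21.symm)
  have adj06 : ¬ G.Adj (.inl b) (.inr s2) := by
    intro hadjx
    have hm := (mem_NB G).2 hadjx
    rw [hrow0] at hm
    simp only [mem_insert, mem_singleton] at hm
    rcases hm with h | h | h | h
    · exact absurd h (hsb'2)
    · exact absurd h (hts02.symm)
    · exact absurd h (hts12.symm)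
    · exact absurd h (hts22.symm)
  have adj10 : G.Adj (.inl α0) (.inr b') := (mem_NB G).1 (by rw [hrow1]; simp)
  have adj11 : G.Adj (.inl α0) (.inr t0) := (mem_NB G).1 (by rw [hrow1]; simp)
  have adj12 : ¬ G.Adj (.inl α0) (.inr t1) := by
    intro hadjx
    have hm := (mem_NB G).2 hadjx
    rw [hrow1] at hm
    simp only [mem_insert, mem_singleton] at hm
    rcases hm with h | h | h
    · exact absurd h (htb'1)
    · exact absurd h (ht01.symm)
    · exact absurd h (hts10)
  have adj13 : ¬ G.Adj (.inl α0) (.inr t2) := by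
    intro hadjx
    have hm := (mem_NB G).2 hadjx
    rw [hrow1] at hm
    simp only [mem_insert, mem_singleton] at hm
    rcases hm with h | h | h
    · exact absurd h (htb'2)
    · exact absurd h (ht02.symm)
    · exact absurd h (hts20)
  have adj14 : G.Adj (.inl α0) (.inr s0) := (mem_NB G).1 (by rw [hrow1]; simp)
  have adj15 : ¬ G.Adj (.inl α0) (.inr s1) := by
    intro hadjx
    have hm := (mem_NB G).2 hadjx
    rw [hrow1] at hm
    simp only [mem_insert, mem_singleton] at hm
    rcases hm with h | h | h
    · exact absurd h (hsb'1)
    · exact absurd h (hts01.symm)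
    · exact absurd h (hs01.symm)
  have adj16 : ¬ G.Adj (.inl α0) (.inr s2) := by
    intro hadjx
    have hm := (mem_NB G).2 hadjx
    rw [hrow1] at hm
    simp only [mem_insert, mem_singleton] at hm
    rcases hm with h | h | h
    · exact absurd h (hsb'2)
    · exact absurd h (hts02.symm)
    · exact absurd h (hs02.symm)
  have adj20 : G.Adj (.inl α1) (.inr b') := (mem_NB G).1 (by rw [hrow2]; simp)
  have adj21 : ¬ G.Adj (.inl α1) (.inr t0) := by
    intro hadjx
    have hm := (mem_NB G).2 hadjx
    rw [hrow2] at hm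
    simp only [mem_insert, mem_singleton] at hm
    rcases hm with h | h | h
    · exact absurd h (htb'0)
    · exact absurd h (ht01)
    · exact absurd h (hts01)
  have adj22 : G.Adj (.inl α1) (.inr t1) := (mem_NB G).1 (by rw [hrow2]; simp)
  have adj23 : ¬ G.Adj (.inl α1) (.inr t2) := by
    intro hadjx
    have hm := (mem_NB G).2 hadjx
    rw [hrow2] at hm
    simp only [mem_insert, mem_singleton] at hm
    rcases hm with h | h | h
    · exact absurd h (htb'2)
    · exact absurd h (ht12.symm)
    · exact absurd h (hts21)
  have adj24 : ¬ G.Adj (.inl α1) (.inr s0) := by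
    intro hadjx
    have hm := (mem_NB G).2 hadjx
    rw [hrow2] at hm
    simp only [mem_insert, mem_singleton] at hm
    rcases hm with h | h | h
    · exact absurd h (hsb'0)
    · exact absurd h (hts10.symm)
    · exact absurd h (hs01)
  have adj25 : G.Adj (.inl α1) (.inr s1) := (mem_NB G).1 (by rw [hrow2]; simp)
  have adj26 : ¬ G.Adj (.inl α1) (.inr s2) := by
    intro hadjx
    have hm := (mem_NB G).2 hadjx
    rw [hrow2] at hm
    simp only [mem_insert, mem_singleton] at hm
    rcases hm with h | h | h
    · exact absurd h (hsb'2)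
    · exact absurd h (hts12.symm)
    · exact absurd h (hs12.symm)
  have adj30 : G.Adj (.inl α2) (.inr b') := (mem_NB G).1 (by rw [hrow3]; simp)
  have adj31 : ¬ G.Adj (.inl α2) (.inr t0) := by
    intro hadjx
    have hm := (mem_NB G).2 hadjx
    rw [hrow3] at hm
    simp only [mem_insert, mem_singleton] at hm
    rcases hm with h | h | h
    · exact absurd h (htb'0)
    · exact absurd h (ht02)
    · exact absurd h (hts02)
  have adj32 : ¬ G.Adj (.inl α2) (.inr t1) := by
    intro hadjx
    have hm := (mem_NB G).2 hadjx
    rw [hrow3] at hm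
    simp only [mem_insert, mem_singleton] at hm
    rcases hm with h | h | h
    · exact absurd h (htb'1)
    · exact absurd h (ht12)
    · exact absurd h (hts12)
  have adj33 : G.Adj (.inl α2) (.inr t2) := (mem_NB G).1 (by rw [hrow3]; simp)
  have adj34 : ¬ G.Adj (.inl α2) (.inr s0) := by
    intro hadjx
    have hm := (mem_NB G).2 hadjx
    rw [hrow3] at hm
    simp only [mem_insert, mem_singleton] at hm
    rcases hm with h | h | h
    · exact absurd h (hsb'0)
    · exact absurd h (hts20.symm)
    · exact absurd h (hs02)
  have adj35 : ¬ G.Adj (.inl α2) (.inr s1) := by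
    intro hadjx
    have hm := (mem_NB G).2 hadjx
    rw [hrow3] at hm
    simp only [mem_insert, mem_singleton] at hm
    rcases hm with h | h | h
    · exact absurd h (hsb'1)
    · exact absurd h (hts21.symm)
    · exact absurd h (hs12)
  have adj36 : G.Adj (.inl α2) (.inr s2) := (mem_NB G).1 (by rw [hrow3]; simp)
  have adj40 : ¬ G.Adj (.inl u0) (.inr b') := by
    intro hadjx
    have hm := (mem_NB G).2 hadjx
    rw [hrow4] at hm
    simp only [mem_insert, mem_singleton] at hm
    rcases hm with h | h | h
    · exact absurd h (htb'0.symm)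
    · exact absurd h (hsb'1.symm)
    · exact absurd h (hsb'2.symm)
  have adj41 : G.Adj (.inl u0) (.inr t0) := (mem_NB G).1 (by rw [hrow4]; simp)
  have adj42 : ¬ G.Adj (.inl u0) (.inr t1) := by
    intro hadjx
    have hm := (mem_NB G).2 hadjx
    rw [hrow4] at hm
    simp only [mem_insert, mem_singleton] at hm
    rcases hm with h | h | h
    · exact absurd h (ht01.symm)
    · exact absurd h (hts11)
    · exact absurd h (hts12)
  have adj43 : ¬ G.Adj (.inl u0) (.inr t2) := by
    intro hadjx
    have hm := (mem_NB G).2 hadjx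
    rw [hrow4] at hm
    simp only [mem_insert, mem_singleton] at hm
    rcases hm with h | h | h
    · exact absurd h (ht02.symm)
    · exact absurd h (hts21)
    · exact absurd h (hts22)
  have adj44 : ¬ G.Adj (.inl u0) (.inr s0) := by
    intro hadjx
    have hm := (mem_NB G).2 hadjx
    rw [hrow4] at hm
    simp only [mem_insert, mem_singleton] at hm
    rcases hm with h | h | h
    · exact absurd h (hts00.symm)
    · exact absurd h (hs01)
    · exact absurd h (hs02)
  have adj45 : G.Adj (.inl u0) (.inr s1) := (mem_NB G).1 (by rw [hrow4]; simp)
  have adj46 : G.Adj (.inl u0) (.inr s2) := (mem_NB G).1 (by rw [hrow4]; simp)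
  have adj50 : ¬ G.Adj (.inl u1) (.inr b') := by
    intro hadjx
    have hm := (mem_NB G).2 hadjx
    rw [hrow5] at hm
    simp only [mem_insert, mem_singleton] at hm
    rcases hm with h | h | h
    · exact absurd h (htb'1.symm)
    · exact absurd h (hsb'0.symm)
    · exact absurd h (hsb'2.symm)
  have adj51 : ¬ G.Adj (.inl u1) (.inr t0) := by
    intro hadjx
    have hm := (mem_NB G).2 hadjx
    rw [hrow5] at hm
    simp only [mem_insert, mem_singleton] at hm
    rcases hm with h | h | h
    · exact absurd h (ht01)
    · exact absurd h (hts00)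
    · exact absurd h (hts02)
  have adj52 : G.Adj (.inl u1) (.inr t1) := (mem_NB G).1 (by rw [hrow5]; simp)
  have adj53 : ¬ G.Adj (.inl u1) (.inr t2) := by
    intro hadjx
    have hm := (mem_NB G).2 hadjx
    rw [hrow5] at hm
    simp only [mem_insert, mem_singleton] at hm
    rcases hm with h | h | h
    · exact absurd h (ht12.symm)
    · exact absurd h (hts20)
    · exact absurd h (hts22)
  have adj54 : G.Adj (.inl u1) (.inr s0) := (mem_NB G).1 (by rw [hrow5]; simp)
  have adj55 : ¬ G.Adj (.inl u1) (.inr s1) := by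
    intro hadjx
    have hm := (mem_NB G).2 hadjx
    rw [hrow5] at hm
    simp only [mem_insert, mem_singleton] at hm
    rcases hm with h | h | h
    · exact absurd h (hts11.symm)
    · exact absurd h (hs01.symm)
    · exact absurd h (hs12)
  have adj56 : G.Adj (.inl u1) (.inr s2) := (mem_NB G).1 (by rw [hrow5]; simp)
  have adj60 : ¬ G.Adj (.inl u2) (.inr b') := by
    intro hadjx
    have hm := (mem_NB G).2 hadjx
    rw [hrow6] at hm
    simp only [mem_insert, mem_singleton] at hm
    rcases hm with h | h | h
    · exact absurd h (htb'2.symm)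
    · exact absurd h (hsb'0.symm)
    · exact absurd h (hsb'1.symm)
  have adj61 : ¬ G.Adj (.inl u2) (.inr t0) := by
    intro hadjx
    have hm := (mem_NB G).2 hadjx
    rw [hrow6] at hm
    simp only [mem_insert, mem_singleton] at hm
    rcases hm with h | h | h
    · exact absurd h (ht02)
    · exact absurd h (hts00)
    · exact absurd h (hts01)
  have adj62 : ¬ G.Adj (.inl u2) (.inr t1) := by
    intro hadjx
    have hm := (mem_NB G).2 hadjx
    rw [hrow6] at hm
    simp only [mem_insert, mem_singleton] at hm
    rcases hm with h | h | h
    · exact absurd h (ht12)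
    · exact absurd h (hts10)
    · exact absurd h (hts11)
  have adj63 : G.Adj (.inl u2) (.inr t2) := (mem_NB G).1 (by rw [hrow6]; simp)
  have adj64 : G.Adj (.inl u2) (.inr s0) := (mem_NB G).1 (by rw [hrow6]; simp)
  have adj65 : G.Adj (.inl u2) (.inr s1) := (mem_NB G).1 (by rw [hrow6]; simp)
  have adj66 : ¬ G.Adj (.inl u2) (.inr s2) := by
    intro hadjx
    have hm := (mem_NB G).2 hadjx
    rw [hrow6] at hm
    simp only [mem_insert, mem_singleton] at hm
    rcases hm with h | h | h
    · exact absurd h (hts22.symm)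
    · exact absurd h (hs02.symm)
    · exact absurd h (hs12.symm)
  have hIff : ∀ i j : Fin 7, G.Adj (.inl (f i)) (.inr (g j)) ↔ Mmat i j = true := by
    intro i j
    fin_cases i <;> fin_cases j <;>
      first
        | exact iff_of_true (by assumption) rfl
        | exact iff_of_false (by assumption) Bool.false_ne_true
  -- assemble the isomorphism
  have hfb : Function.Bijective f := (Finite.injective_iff_bijective).1 hfinj
  have hgb : Function.Bijective g := (Finite.injective_iff_bijective).1 hginj
  refine ⟨{ toEquiv := Equiv.sumCongr (Equiv.ofBijective f hfb) (Equiv.ofBijective g hgb),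
            map_rel_iff' := ?_ }⟩
  rintro (i | i) (j | j)
  · constructor
    · intro h
      rcases hbip _ _ h with ⟨_, h2⟩ | ⟨h1, _⟩
      · exact absurd h2 (by simp)
      · exact absurd h1 (by simp)
    · intro h; exact h.elim
  · exact hIff i j
  · constructor
    · intro h
      exact (hIff j i).1 h.symm
    · intro h
      exact ((hIff j i).2 h).symm
  · constructor
    · intro h
      rcases hbip _ _ h with ⟨h1, _⟩ | ⟨_, h2⟩
      · exact absurd h1 (by simp)
      · exact absurd h2 (by simp)
    · intro h; exact h.elim


lemma keyIso (G : SimpleGraph (Fin 7 ⊕ Fin 7)) [DecidableRel G.Adj]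
    (hbip : ∀ x y, G.Adj x y → (x.isLeft ∧ y.isRight) ∨ (x.isRight ∧ y.isLeft))
    (hA : Multiset.map (fun i : Fin 7 => G.degree (Sum.inl i)) Finset.univ.val
      = {4, 3, 3, 3, 3, 3, 3})
    (hB : Multiset.map (fun j : Fin 7 => G.degree (Sum.inr j)) Finset.univ.val
      = {4, 3, 3, 3, 3, 3, 3})
    (b b' : Fin 7)
    (hb : G.degree (Sum.inl b) = 4) (hb' : G.degree (Sum.inr b') = 4)
    (hadj : G.Adj (Sum.inl b) (Sum.inr b'))
    (h4 : ∀ (v : Fin 7 ⊕ Fin 7) (c : G.Walk v v), c.IsCycle → c.length = 4 →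
      s(Sum.inl b, Sum.inr b') ∈ c.edges) :
    Nonempty (Cgraph ≃g G) := by
  apply keyAux G hbip b b'
  · intro x hx
    rw [NB_card G hbip]
    exact deg_eq_three _ hA b hb x hx
  · intro y hy
    rw [NA_card G hbip]
    exact deg_eq_three _ hB b' hb' y hy
  · rw [NB_card G hbip]; exact hb
  · rw [NA_card G hbip]; exact hb'
  · exact hadj
  · intro x x' hx hx' hxx; exact F1A G h4 hx hx' hxx
  · intro y y' hy hy' hyy; exact F1B G h4 hy hy' hyy
  · intro x hx; exact F2A G h4 hx
  · intro y hy; exact F2B G h4 hy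

/-- Up to isomorphism there is a unique bipartite graph with parts of size 7, both of degree
multiset `{4,3,3,3,3,3,3}`, whose two degree-4 vertices (one in each part) are adjacent and
such that every 4-cycle contains the edge joining the two degree-4 vertices
(namely Cousin 89 of the `E₉+e` family). -/
theorem cousin89_unique
    (G G' : SimpleGraph (Fin 7 ⊕ Fin 7)) [DecidableRel G.Adj] [DecidableRel G'.Adj]
    (hbip : ∀ x y, G.Adj x y → (x.isLeft ∧ y.isRight) ∨ (x.isRight ∧ y.isLeft))
    (hbip' : ∀ x y, G'.Adj x y → (x.isLeft ∧ y.isRight) ∨ (x.isRight ∧ y.isLeft))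
    (hA : Multiset.map (fun i : Fin 7 => G.degree (Sum.inl i)) Finset.univ.val
      = {4, 3, 3, 3, 3, 3, 3})
    (hB : Multiset.map (fun j : Fin 7 => G.degree (Sum.inr j)) Finset.univ.val
      = {4, 3, 3, 3, 3, 3, 3})
    (hA' : Multiset.map (fun i : Fin 7 => G'.degree (Sum.inl i)) Finset.univ.val
      = {4, 3, 3, 3, 3, 3, 3})
    (hB' : Multiset.map (fun j : Fin 7 => G'.degree (Sum.inr j)) Finset.univ.val
      = {4, 3, 3, 3, 3, 3, 3})
    (b b' : Fin 7)
    (hb : G.degree (Sum.inl b) = 4) (hb' : G.degree (Sum.inr b') = 4)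
    (hadj : G.Adj (Sum.inl b) (Sum.inr b'))
    (h4 : ∀ (v : Fin 7 ⊕ Fin 7) (c : G.Walk v v), c.IsCycle → c.length = 4 →
      s(Sum.inl b, Sum.inr b') ∈ c.edges)
    (c c' : Fin 7)
    (hc : G'.degree (Sum.inl c) = 4) (hc' : G'.degree (Sum.inr c') = 4)
    (hadj' : G'.Adj (Sum.inl c) (Sum.inr c'))
    (h4' : ∀ (v : Fin 7 ⊕ Fin 7) (w : G'.Walk v v), w.IsCycle → w.length = 4 →
      s(Sum.inl c, Sum.inr c') ∈ w.edges) :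
    Nonempty (G ≃g G') := by
  obtain ⟨e⟩ := keyIso G hbip hA hB b b' hb hb' hadj h4
  obtain ⟨e'⟩ := keyIso G' hbip' hA' hB' c c' hc hc' hadj' h4'
  exact ⟨e.symm.trans e'⟩
end
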